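/- arXiv:2505.17288 — 6 statements merged into one kernel-verified Lean document; each statement's English description precedes it below -/
import Mathlib

section
/- For a class F of next-token predictors with VC dimension d, the growth function of the induced autoregressive 0-1 loss class L(F^AR) = { (x,y) ↦ 1{y ≠ f^AR(x)} : f ∈ F } satisfies Γ_{L(F^AR)}(n) ≤ Γ_F(nT) ≤ (e n T / d)^d for nT ≥ d, and consequently VC(L(F^AR)) ≤ 3 d log₂(2T / log 2) = O(d log T). -/
/-- Autoregressive unrolling of a next-token predictor. -/
def arList (f : List Bool → Bool) (x : List Bool) : ℕ → List Bool
  | 0 => []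
  | T + 1 => arList f x T ++ [f (x ++ arList f x T)]

/-- The set of labelings a binary class realizes on `n` points. -/
def labelings {α : Type*} (H : Set (α → Bool)) {n : ℕ} (xs : Fin n → α) :
    Set (Fin n → Bool) :=
  {v | ∃ h ∈ H, ∀ i, v i = h (xs i)}

/-- Growth function of a binary class. -/
noncomputable def growth {α : Type*} (H : Set (α → Bool)) (n : ℕ) : ℕ :=
  sSup {k | ∃ xs : Fin n → α, k = (labelings H xs).ncard}

/-- `H` shatters the points `xs`. -/
def Shatters {α : Type*} (H : Set (α → Bool)) {n : ℕ} (xs : Fin n → α) : Prop :=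
  ∀ v : Fin n → Bool, ∃ h ∈ H, ∀ i, h (xs i) = v i

/-- The VC dimension of `H` is at most `d`. -/
def VCdimLe {α : Type*} (H : Set (α → Bool)) (d : ℕ) : Prop :=
  ∀ n (xs : Fin n → α), Shatters H xs → n ≤ d

/-- The autoregressive 0-1 loss class `L(F^AR) = {(x,y) ↦ 1{y ≠ f^AR(x)} : f ∈ F}`. -/
def lossClass (F : Set (List Bool → Bool)) (T : ℕ) :
    Set (List Bool × List Bool → Bool) :=
  {g | ∃ f ∈ F, g = fun p => decide (p.2 ≠ arList f p.1 T)}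

lemma arList_length (f x) : ∀ T, (arList f x T).length = T := by
  intro T; induction T with
  | zero => rfl
  | succ T ih => simp [arList, ih]

lemma arList_take (f x) : ∀ T t, t ≤ T → (arList f x T).take t = arList f x t := by
  intro T; induction T with
  | zero => intro t ht; interval_cases t; simp [arList]
  | succ T ih =>
    intro t ht
    rcases Nat.lt_succ_iff_lt_or_eq.mp (Nat.lt_succ_of_le ht) with h | h
    · rw [arList, List.take_append_of_le_length (by rw [arList_length]; omega)]
      exact ih t (by omega)
    · subst h
      rw [List.take_of_length_le (by rw [arList_length])]

lemma arList_getD (f x) : ∀ T t, t < T →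
    (arList f x T).getD t false = f (x ++ arList f x t) := by
  intro T; induction T with
  | zero => omega
  | succ T ih =>
    intro t ht
    rcases Nat.lt_succ_iff_lt_or_eq.mp ht with h | h
    · rw [arList, List.getD_append _ _ _ _ (by rw [arList_length]; omega)]
      exact ih t h
    · subst h
      rw [arList, List.getD_append_right _ _ _ _ (by rw [arList_length])]
      simp [arList_length]

lemma arList_eq_iff (f x T y) : arList f x T = y ↔
    (y.length = T ∧ ∀ t, t < T → f (x ++ y.take t) = y.getD t false) := by
  constructor
  · rintro rfl
    refine ⟨arList_length f x T, fun t ht => ?_⟩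
    rw [arList_take f x T t ht.le, arList_getD f x T t ht]
  · intro h
    induction T generalizing y with
    | zero =>
      have : y = [] := List.length_eq_zero_iff.mp h.1
      simp [arList, this]
    | succ T ih =>
      obtain ⟨hlen, hcond⟩ := h
      have hT : T < y.length := by omega
      have h1 : arList f x T = y.take T := by
        refine ih (y.take T) ⟨by simp [hlen], fun t ht => ?_⟩
        rw [List.take_take, min_eq_left ht.le]
        have := hcond t (by omega)
        rw [this]
        have ht' : t < (y.take T).length := by simp; omega
        rw [List.getD_eq_getElem _ _ ht', List.getD_eq_getElem _ _ (by omega),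
          List.getElem_take]
      rw [arList, h1, hcond T (by omega), List.getD_eq_getElem _ _ hT]
      rw [← List.concat_eq_append, List.take_concat_get, ← hlen, List.take_length]

lemma ncard_labelings_le_growth {α : Type*} (H : Set (α → Bool)) {n : ℕ}
    (xs : Fin n → α) : (labelings H xs).ncard ≤ growth H n := by
  apply le_csSup
  · refine ⟨Nat.card (Fin n → Bool), ?_⟩
    rintro k ⟨ys, rfl⟩
    calc (labelings H ys).ncard ≤ (Set.univ : Set (Fin n → Bool)).ncard :=
          Set.ncard_le_ncard (Set.subset_univ _) Set.finite_univ
      _ = Nat.card (Fin n → Bool) := Set.ncard_univ _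
  · exact ⟨xs, rfl⟩

lemma growth_le {α : Type*} (H : Set (α → Bool)) {n m : ℕ}
    (hb : ∀ xs : Fin n → α, (labelings H xs).ncard ≤ m) : growth H n ≤ m := by
  apply csSup_le'
  rintro k ⟨xs, rfl⟩
  exact hb xs

/-- Key: the loss labelings on `n` pairs are a function of `F`'s labelings on `n*T` fixed points. -/
lemma ncard_loss_labelings_le (F : Set (List Bool → Bool)) (T n : ℕ)
    (zs : Fin n → List Bool × List Bool) :
    (labelings (lossClass F T) zs).ncard ≤ growth F (n * T) := by
  set ps : Fin (n * T) → List Bool := fun k =>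
    (zs (finProdFinEquiv.symm k).1).1 ++
      (zs (finProdFinEquiv.symm k).1).2.take (finProdFinEquiv.symm k).2 with hps
  set Φ : (Fin (n * T) → Bool) → (Fin n → Bool) := fun w i =>
    !(decide ((zs i).2.length = T) &&
      decide (∀ t : Fin T, w (finProdFinEquiv (i, t)) = (zs i).2.getD t false)) with hΦ
  have hsub : labelings (lossClass F T) zs ⊆ Φ '' labelings F ps := by
    rintro v ⟨g, ⟨f, hf, rfl⟩, hv⟩
    refine ⟨fun k => f (ps k), ⟨f, hf, fun k => rfl⟩, ?_⟩
    funext i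
    have hpt : ∀ t : Fin T, f (ps (finProdFinEquiv (i, t)))
        = f ((zs i).1 ++ (zs i).2.take t) := by
      intro t; simp only [hps]; rw [Equiv.symm_apply_apply]
    rw [hv i]
    simp only [hΦ, hpt]
    by_cases h : arList f (zs i).1 T = (zs i).2
    · have h2 := (arList_eq_iff f (zs i).1 T (zs i).2).mp h
      have : (decide ¬((zs i).2 = arList f (zs i).1 T)) = false := by
        simp [h.symm]
      rw [this]
      have : (∀ t : Fin T, f ((zs i).1 ++ (zs i).2.take ↑t) = (zs i).2.getD ↑t false) :=
        fun t => h2.2 t t.isLt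
      simp [h2.1, this]
    · have hne : (zs i).2 ≠ arList f (zs i).1 T := fun hh => h hh.symm
      have h1 : (decide ¬((zs i).2 = arList f (zs i).1 T)) = true := by
        simpa using hne
      rw [h1]
      have h2 : ¬((zs i).2.length = T ∧ ∀ t, t < T →
          f ((zs i).1 ++ (zs i).2.take t) = (zs i).2.getD t false) :=
        fun hh => h ((arList_eq_iff f (zs i).1 T (zs i).2).mpr hh)
      push_neg at h2
      by_cases hl : (zs i).2.length = T
      · obtain ⟨t, ht, hne⟩ := h2 hl
        have : ¬ (∀ t : Fin T, f ((zs i).1 ++ (zs i).2.take ↑t) = (zs i).2.getD ↑t false) :=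
          fun hall => hne (hall ⟨t, ht⟩)
        rw [decide_eq_false this, Bool.and_false]
        rfl
      · simp [hl]
  calc (labelings (lossClass F T) zs).ncard
      ≤ (Φ '' labelings F ps).ncard := Set.ncard_le_ncard hsub (Set.toFinite _)
    _ ≤ (labelings F ps).ncard := Set.ncard_image_le (Set.toFinite _)
    _ ≤ growth F (n * T) := ncard_labelings_le_growth F ps

open Finset in
lemma ncard_labelings_le_sauer {α : Type*} {H : Set (α → Bool)} {d : ℕ}
    (hH : VCdimLe H d) {m : ℕ} (xs : Fin m → α) :
    (labelings H xs).ncard ≤ ∑ k ∈ Iic d, m.choose k := by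
  classical
  set S : Finset (Fin m → Bool) := (labelings H xs).toFinset with hS
  have hncard : (labelings H xs).ncard = S.card := Set.ncard_eq_toFinset_card' _
  set τ : (Fin m → Bool) → Finset (Fin m) := fun v => univ.filter (fun i => v i = true) with hτ
  have hτinj : Function.Injective τ := by
    intro u v huv
    funext i
    have : i ∈ τ u ↔ i ∈ τ v := by rw [huv]
    simp only [hτ, mem_filter, mem_univ, true_and] at this
    cases hu : u i <;> cases hv : v i <;> simp_all
  set 𝒜 : Finset (Finset (Fin m)) := S.image τ with h𝒜
  have hcard : S.card = 𝒜.card := (card_image_of_injective S hτinj).symm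
  have hvc : 𝒜.vcDim ≤ d := by
    apply Finset.sup_le
    intro s hs
    have hsh : 𝒜.Shatters s := mem_shatterer.mp hs
    set e := s.orderIsoOfFin (rfl : s.card = s.card) with he
    refine hH s.card (fun j => xs (e j)) ?_
    intro v
    obtain ⟨u, hu𝒜, hsu⟩ := hsh (t := (univ.filter (fun j => v j = true)).image
      (fun j => (e j : Fin m))) (by
        intro a ha
        simp only [mem_image] at ha
        obtain ⟨j, _, rfl⟩ := ha
        exact (e j).2)
    simp only [h𝒜, mem_image] at hu𝒜
    obtain ⟨w, hwS, rfl⟩ := hu𝒜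
    rw [hS, Set.mem_toFinset] at hwS
    obtain ⟨h, hhH, hwh⟩ := hwS
    refine ⟨h, hhH, fun j => ?_⟩
    have hj : (e j : Fin m) ∈ s := (e j).2
    have h1 : (e j : Fin m) ∈ s ∩ τ w ↔
        (e j : Fin m) ∈ (univ.filter (fun j => v j = true)).image (fun j => (e j : Fin m)) := by
      rw [hsu]
    simp only [mem_inter, hτ, mem_filter, mem_univ, true_and, mem_image, hj] at h1
    have h2 : w (e j) = true ↔ v j = true := by
      rw [h1]
      constructor
      · rintro ⟨j', hj', hej⟩
        have : j' = j := e.injective (Subtype.ext hej)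
        subst this
        exact hj'
      · intro hv
        exact ⟨j, hv, rfl⟩
    show h (xs (e j)) = v j
    rw [← hwh (e j)]
    cases hv : v j
    · exact Bool.eq_false_iff.mpr (fun hw => by rw [h2.mp hw] at hv; exact Bool.noConfusion hv)
    · exact h2.mpr hv
  calc (labelings H xs).ncard = S.card := hncard
    _ = 𝒜.card := hcard
    _ ≤ 𝒜.shatterer.card := card_le_card_shatterer 𝒜
    _ ≤ ∑ k ∈ Iic 𝒜.vcDim, (Fintype.card (Fin m)).choose k := card_shatterer_le_sum_vcDim
    _ ≤ ∑ k ∈ Iic d, m.choose k := by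
        simp only [Fintype.card_fin]
        exact sum_le_sum_of_subset (Iic_subset_Iic.mpr hvc)

open Finset Real in
lemma sauer_sum_le_exp {d m : ℕ} (hd : 1 ≤ d) (hdm : d ≤ m) :
    ((∑ k ∈ Iic d, m.choose k : ℕ) : ℝ) ≤ (Real.exp 1 * m / d) ^ d := by
  have hm0 : 0 < m := lt_of_lt_of_le hd hdm
  have hm : (0:ℝ) < m := by exact_mod_cast hm0
  have hd0 : (0:ℝ) < d := by exact_mod_cast hd
  set r : ℝ := d / m with hr
  have hr0 : 0 < r := by positivity
  have hr1 : r ≤ 1 := by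
    rw [hr, div_le_one hm]; exact_mod_cast hdm
  set S : ℝ := ((∑ k ∈ Iic d, m.choose k : ℕ) : ℝ) with hSdef
  have hS : S = ∑ k ∈ Iic d, (m.choose k : ℝ) := by push_cast [hSdef]; ring
  have step1 : S * r ^ d ≤ ∑ k ∈ Iic d, (m.choose k : ℝ) * r ^ k := by
    rw [hS, Finset.sum_mul]
    apply Finset.sum_le_sum
    intro k hk
    have hk' : k ≤ d := mem_Iic.mp hk
    have : r ^ d ≤ r ^ k := pow_le_pow_of_le_one hr0.le hr1 hk'
    have hcpos : (0:ℝ) ≤ (m.choose k : ℝ) := by positivity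
    nlinarith
  have step2 : ∑ k ∈ Iic d, (m.choose k : ℝ) * r ^ k
      ≤ ∑ k ∈ Finset.range (m+1), (m.choose k : ℝ) * r ^ k := by
    apply Finset.sum_le_sum_of_subset_of_nonneg
    · intro k hk
      simp only [mem_Iic] at hk
      simp only [Finset.mem_range]
      omega
    · intro k _ _
      positivity
  have step3 : ∑ k ∈ Finset.range (m+1), (m.choose k : ℝ) * r ^ k = (r + 1) ^ m := by
    rw [add_pow]
    apply Finset.sum_congr rfl
    intro k _
    simp [mul_comm]
  have step4 : (r + 1) ^ m ≤ Real.exp d := by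
    have h1 : (r + 1 : ℝ) ≤ Real.exp r := Real.add_one_le_exp r
    calc (r + 1) ^ m ≤ (Real.exp r) ^ m := by
          apply pow_le_pow_left₀ (by positivity) h1
      _ = Real.exp (r * m) := by
          rw [← Real.exp_nat_mul]; ring_nf
      _ = Real.exp d := by
          congr 1
          rw [hr, div_mul_cancel₀ _ hm.ne']
  have key : S * r ^ d ≤ Real.exp d := le_trans step1 (le_trans step2 (step3 ▸ step4))
  have hrd : 0 < r ^ d := by positivity
  have : S ≤ Real.exp d / r ^ d := by
    rw [le_div_iff₀ hrd]; exact key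
  calc S ≤ Real.exp d / r ^ d := this
    _ = (Real.exp 1 * m / d) ^ d := by
        rw [← Real.exp_one_pow, div_eq_mul_inv, ← inv_pow, ← mul_pow]
        congr 1
        rw [hr]
        field_simp

open Real in
lemma log_algebra {T d m : ℕ} (hd : 1 ≤ d) (hT : 1 ≤ T) (hm : 1 ≤ m)
    (hkey : (2:ℝ) ^ m ≤ (Real.exp 1 * m * T / d) ^ d) :
    (m : ℝ) ≤ 3 * d * Real.logb 2 (2 * T / Real.log 2) := by
  have hd0 : (0:ℝ) < d := by exact_mod_cast hd
  have hT0 : (0:ℝ) < T := by exact_mod_cast hT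
  have hm0 : (0:ℝ) < m := by exact_mod_cast hm
  have hl2 : (0:ℝ) < Real.log 2 := Real.log_pos (by norm_num)
  have hbase : (0:ℝ) < Real.exp 1 * m * T / d := by positivity
  -- take logs
  have hlog : (m : ℝ) * Real.log 2 ≤ d * Real.log (Real.exp 1 * m * T / d) := by
    have := Real.log_le_log (by positivity) hkey
    rwa [Real.log_pow, Real.log_pow] at this
  set c : ℝ := 2 * T / Real.log 2 with hc
  have hc1 : 1 < c := by
    rw [hc, lt_div_iff₀ hl2, one_mul]
    have h9 : Real.log 2 < 0.6931471808 := Real.log_two_lt_d9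
    have hT2 : (1:ℝ) ≤ T := by exact_mod_cast hT
    have : (2:ℝ) ≤ 2 * T := by linarith
    linarith
  have hc0 : 0 < c := lt_trans one_pos hc1
  -- split the log
  have hv : (0:ℝ) < Real.exp 1 * (m * Real.log 2 / (2 * d)) := by positivity
  have hsplit : Real.exp 1 * m * T / d = c * (Real.exp 1 * (m * Real.log 2 / (2 * d))) := by
    rw [hc]; field_simp
  have hlogsplit : Real.log (Real.exp 1 * m * T / d)
      = Real.log c + Real.log (Real.exp 1 * (m * Real.log 2 / (2 * d))) := by
    rw [hsplit, Real.log_mul (ne_of_gt hc0) (ne_of_gt hv)]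
  -- ln v ≤ v / e i.e. log (e * u) ≤ u for u > 0... log(e*u) = 1 + log u ≤ 1 + u - 1 = u
  have hlnv : Real.log (Real.exp 1 * (m * Real.log 2 / (2 * d))) ≤ m * Real.log 2 / (2 * d) := by
    rw [Real.log_mul (Real.exp_ne_zero 1) (by positivity), Real.log_exp]
    have := Real.log_le_sub_one_of_pos (show (0:ℝ) < m * Real.log 2 / (2 * d) by positivity)
    linarith
  have hfinal : (m : ℝ) * Real.log 2 ≤ d * Real.log c + m * Real.log 2 / 2 := by
    calc (m : ℝ) * Real.log 2 ≤ d * Real.log (Real.exp 1 * m * T / d) := hlog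
      _ = d * Real.log c + d * Real.log (Real.exp 1 * (m * Real.log 2 / (2 * d))) := by
          rw [hlogsplit]; ring
      _ ≤ d * Real.log c + d * (m * Real.log 2 / (2 * d)) := by nlinarith
      _ = d * Real.log c + m * Real.log 2 / 2 := by field_simp
  have hlogc : 0 < Real.log c := Real.log_pos hc1
  have h2 : (m : ℝ) * Real.log 2 ≤ 2 * d * Real.log c := by linarith
  have : (m : ℝ) ≤ 2 * d * (Real.log c / Real.log 2) := by
    rw [mul_div_assoc'] at *
    rw [le_div_iff₀ hl2]
    linarith
  calc (m : ℝ) ≤ 2 * d * (Real.log c / Real.log 2) := this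
    _ ≤ 3 * d * (Real.log c / Real.log 2) := by
        have : 0 < Real.log c / Real.log 2 := by positivity
        nlinarith
    _ = 3 * d * Real.logb 2 c := by rw [Real.logb]


/-- growth-function bound `Γ_{L(F^AR)}(n) ≤ Γ_F(nT) ≤ (enT/d)^d`
for `nT ≥ d`, and the consequent VC bound `VC(L(F^AR)) ≤ 3 d log₂(2T / log 2)`. -/
theorem growth_loss_class_le (T d n : ℕ) (hd : 1 ≤ d) (hT : 1 ≤ T)
    (F : Set (List Bool → Bool))
    (hVCub : VCdimLe F d) (hVClb : ∃ xs : Fin d → List Bool, Shatters F xs)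
    (hn : d ≤ n * T) :
    growth (lossClass F T) n ≤ growth F (n * T) ∧
    (growth F (n * T) : ℝ) ≤ (Real.exp 1 * n * T / d) ^ d ∧
    ∀ m (zs : Fin m → List Bool × List Bool), Shatters (lossClass F T) zs →
      (m : ℝ) ≤ 3 * d * Real.logb 2 (2 * T / Real.log 2) := by
  have hsauer : ∀ m', d ≤ m' → (growth F m' : ℝ) ≤ (Real.exp 1 * m' / d) ^ d := by
    intro m' hdm
    have h1 : growth F m' ≤ ∑ k ∈ Finset.Iic d, m'.choose k :=
      growth_le F (fun xs => ncard_labelings_le_sauer hVCub xs)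
    calc (growth F m' : ℝ) ≤ ((∑ k ∈ Finset.Iic d, m'.choose k : ℕ) : ℝ) := by
          exact_mod_cast h1
      _ ≤ (Real.exp 1 * m' / d) ^ d := sauer_sum_le_exp hd hdm
  refine ⟨growth_le _ (fun zs => ncard_loss_labelings_le F T n zs), ?_, ?_⟩
  · have h := hsauer (n * T) hn
    have hcast : (Real.exp 1 * ((n * T : ℕ) : ℝ) / d) ^ d
        = (Real.exp 1 * n * T / d) ^ d := by push_cast; ring
    rw [hcast] at h
    exact h
  · intro m zs hsh
    by_cases hcase : d ≤ m * T
    · have hm1 : 1 ≤ m := by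
        rcases Nat.eq_zero_or_pos m with h0 | h0
        · subst h0; simp at hcase; omega
        · exact h0
      have huniv : labelings (lossClass F T) zs = Set.univ := by
        ext v
        simp only [Set.mem_univ, iff_true]
        obtain ⟨g, hg, hv⟩ := hsh v
        exact ⟨g, hg, fun i => (hv i).symm⟩
      have hcard : (labelings (lossClass F T) zs).ncard = 2 ^ m := by
        rw [huniv, Set.ncard_univ]
        simp [Nat.card_eq_fintype_card]
      have hchain : (2:ℝ) ^ m ≤ (Real.exp 1 * m * T / d) ^ d := by
        have h1 : (2:ℕ) ^ m ≤ growth F (m * T) := by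
          rw [← hcard]; exact ncard_loss_labelings_le F T m zs
        have h2 := hsauer (m * T) hcase
        calc ((2:ℝ)) ^ m = (((2:ℕ) ^ m : ℕ) : ℝ) := by push_cast; ring
          _ ≤ (growth F (m * T) : ℝ) := by exact_mod_cast h1
          _ ≤ (Real.exp 1 * ((m * T : ℕ) : ℝ) / d) ^ d := h2
          _ = (Real.exp 1 * m * T / d) ^ d := by push_cast; ring
      exact log_algebra hd hT hm1 hchain
    · push_neg at hcase
      have hmm : m ≤ m * T := Nat.le_mul_of_pos_right m hT
      have hmd : m < d := lt_of_le_of_lt hmm hcase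
      have hl2 : (0:ℝ) < Real.log 2 := Real.log_pos (by norm_num)
      have hT1 : (1:ℝ) ≤ T := by exact_mod_cast hT
      have hc2 : (2:ℝ) ≤ 2 * T / Real.log 2 := by
        rw [le_div_iff₀ hl2]
        have h9 : Real.log 2 < 0.6931471808 := Real.log_two_lt_d9
        nlinarith
      have hlogb : 1 ≤ Real.logb 2 (2 * T / Real.log 2) := by
        calc (1:ℝ) = Real.logb 2 2 := (Real.logb_self_eq_one (by norm_num : (1:ℝ) < 2)).symm
          _ ≤ Real.logb 2 (2 * T / Real.log 2) :=
              Real.logb_le_logb_of_le (by norm_num) (by norm_num) hc2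
      have hmd' : (m:ℝ) ≤ d := by exact_mod_cast hmd.le
      have hd0 : (0:ℝ) ≤ d := by positivity
      nlinarith
end

section
/- Let r : X × Y → [0,1] be a reward function with a σ-margin: for every x, max over the argmax set Y*(x) exceeds the maximum of r(x,·) over Y \ Y*(x) by more than σ > 0. Let π₀(·|x) be a base distribution over Y, P₀(x) = P_{y∼π₀(·|x)}(y ∈ Y*(x)), and let r̂ be any estimated reward with δ(x,y) = r̂(x,y) − r(x,y). Let π_BoN draw N i.i.d. samples y₁,...,y_N ∼ π₀(·|x) and output an argmax of r̂(x,·) among them. Then E_x E_{y ∼ π_BoN(·|x)} 1{y ∈ Y*(x)} ≥ 1 − (2N/σ) · E_{x, y ∼ P_x × π₀(·|x)} |δ(x,y)| − E_x (1 − P₀(x))^N. -/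
open Classical Finset in
private lemma sum_prod_fn {Y : Type*} [Fintype Y] {N : ℕ} (f : Fin N → Y → ℝ) :
    ∑ ys : Fin N → Y, ∏ j, f j (ys j) = ∏ j, ∑ y, f j y := by
  rw [Finset.prod_univ_sum]
  rw [Fintype.piFinset_univ]

open Classical Finset in
private lemma per_x_bound {Y : Type*} [Fintype Y] (π₀ : Y → ℝ) (hπ0 : ∀ y, 0 ≤ π₀ y)
    (hπ1 : ∑ y, π₀ y = 1) (δ : Y → ℝ) (A : Set Y) (σ : ℝ) (hσ : 0 < σ)
    (N : ℕ) (sel : (Fin N → Y) → Y)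
    (hpt : ∀ ys : Fin N → Y, (1 : ℝ) - (if sel ys ∈ A then 1 else 0) ≤
        (∑ j, if σ/2 ≤ |δ (ys j)| then (1:ℝ) else 0) + ∏ j, (if ys j ∈ A then (0:ℝ) else 1)) :
    ∑ ys : Fin N → Y, (∏ j, π₀ (ys j)) * (if sel ys ∈ A then (1:ℝ) else 0) ≥
      1 - ((2 * N / σ) * (∑ y, π₀ y * |δ y|) +
        (1 - ∑ y ∈ Finset.univ.filter (· ∈ A), π₀ y) ^ N) := by
  have hμ0 : ∀ ys : Fin N → Y, 0 ≤ ∏ j, π₀ (ys j) :=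
    fun ys => Finset.prod_nonneg fun j _ => hπ0 _
  have hmass : ∑ ys : Fin N → Y, ∏ j, π₀ (ys j) = 1 := by
    rw [sum_prod_fn (fun _ => π₀)]
    simp [hπ1]
  -- term A : union bound part
  have hA : ∑ ys : Fin N → Y, (∏ j, π₀ (ys j)) * (∑ j, if σ/2 ≤ |δ (ys j)| then (1:ℝ) else 0)
      ≤ 2 * N / σ * ∑ y, π₀ y * |δ y| := by
    have hswap : ∑ ys : Fin N → Y, (∏ j, π₀ (ys j)) * (∑ j, if σ/2 ≤ |δ (ys j)| then (1:ℝ) else 0)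
        = ∑ j : Fin N, ∑ ys : Fin N → Y, (∏ k, π₀ (ys k)) * (if σ/2 ≤ |δ (ys j)| then (1:ℝ) else 0) := by
      simp_rw [Finset.mul_sum]
      exact Finset.sum_comm
    rw [hswap]
    have hone : ∀ j : Fin N, ∑ ys : Fin N → Y, (∏ k, π₀ (ys k)) * (if σ/2 ≤ |δ (ys j)| then (1:ℝ) else 0)
        = ∑ y, π₀ y * (if σ/2 ≤ |δ y| then (1:ℝ) else 0) := by
      intro j
      have h := sum_prod_fn (fun k y => π₀ y * (if k = j then (if σ/2 ≤ |δ y| then (1:ℝ) else 0) else 1))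
      have hL : ∀ ys : Fin N → Y,
          (∏ k, π₀ (ys k) * (if k = j then (if σ/2 ≤ |δ (ys k)| then (1:ℝ) else 0) else 1))
          = (∏ k, π₀ (ys k)) * (if σ/2 ≤ |δ (ys j)| then (1:ℝ) else 0) := by
        intro ys
        rw [Finset.prod_mul_distrib]
        congr 1
        exact Finset.prod_ite_eq' Finset.univ j (fun k => if σ/2 ≤ |δ (ys k)| then (1:ℝ) else 0) |>.trans (by simp)
      have hR : (∏ k : Fin N, ∑ y, π₀ y * (if k = j then (if σ/2 ≤ |δ y| then (1:ℝ) else 0) else 1))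
          = ∑ y, π₀ y * (if σ/2 ≤ |δ y| then (1:ℝ) else 0) := by
        rw [Finset.prod_eq_single j]
        · simp
        · intro k _ hk
          simp [hk, hπ1]
        · simp
      calc ∑ ys : Fin N → Y, (∏ k, π₀ (ys k)) * (if σ/2 ≤ |δ (ys j)| then (1:ℝ) else 0)
          = ∑ ys : Fin N → Y, ∏ k, π₀ (ys k) * (if k = j then (if σ/2 ≤ |δ (ys k)| then (1:ℝ) else 0) else 1) := by
            exact Finset.sum_congr rfl fun ys _ => (hL ys).symm
        _ = _ := by rw [h, hR]
    have hmarkov : ∑ y, π₀ y * (if σ/2 ≤ |δ y| then (1:ℝ) else 0) ≤ (2/σ) * ∑ y, π₀ y * |δ y| := by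
      rw [Finset.mul_sum]
      apply Finset.sum_le_sum
      intro y _
      by_cases hy : σ/2 ≤ |δ y|
      · rw [if_pos hy]
        have h1 : (1:ℝ) ≤ 2/σ * |δ y| := by
          rw [div_mul_eq_mul_div, le_div_iff₀ hσ]
          linarith
        calc π₀ y * 1 = π₀ y := mul_one _
          _ ≤ π₀ y * (2/σ * |δ y|) := le_mul_of_one_le_right (hπ0 y) h1
          _ = 2/σ * (π₀ y * |δ y|) := by ring
      · rw [if_neg hy, mul_zero]
        exact mul_nonneg (by positivity) (mul_nonneg (hπ0 y) (abs_nonneg _))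
    calc ∑ j : Fin N, ∑ ys : Fin N → Y, (∏ k, π₀ (ys k)) * (if σ/2 ≤ |δ (ys j)| then (1:ℝ) else 0)
        = ∑ j : Fin N, ∑ y, π₀ y * (if σ/2 ≤ |δ y| then (1:ℝ) else 0) := by
          exact Finset.sum_congr rfl fun j _ => hone j
      _ = N * ∑ y, π₀ y * (if σ/2 ≤ |δ y| then (1:ℝ) else 0) := by
          rw [Finset.sum_const, Finset.card_univ, Fintype.card_fin, nsmul_eq_mul]
      _ ≤ N * ((2/σ) * ∑ y, π₀ y * |δ y|) := by
          apply mul_le_mul_of_nonneg_left hmarkov (by positivity)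
      _ = 2 * N / σ * ∑ y, π₀ y * |δ y| := by ring
  -- term B : coverage part
  have hB : ∑ ys : Fin N → Y, (∏ j, π₀ (ys j)) * (∏ j, if ys j ∈ A then (0:ℝ) else 1)
      = (1 - ∑ y ∈ Finset.univ.filter (· ∈ A), π₀ y) ^ N := by
    have hL : ∀ ys : Fin N → Y, (∏ j, π₀ (ys j)) * (∏ j, if ys j ∈ A then (0:ℝ) else 1)
        = ∏ j, π₀ (ys j) * (if ys j ∈ A then (0:ℝ) else 1) := by
      intro ys; rw [Finset.prod_mul_distrib]
    have hSum : ∑ y, π₀ y * (if y ∈ A then (0:ℝ) else 1)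
        = 1 - ∑ y ∈ Finset.univ.filter (· ∈ A), π₀ y := by
      rw [Finset.sum_filter]
      rw [← hπ1, ← Finset.sum_sub_distrib]
      apply Finset.sum_congr rfl
      intro y _
      by_cases hy : y ∈ A <;> simp [hy, hπ1]
    calc ∑ ys : Fin N → Y, (∏ j, π₀ (ys j)) * (∏ j, if ys j ∈ A then (0:ℝ) else 1)
        = ∑ ys : Fin N → Y, ∏ j, π₀ (ys j) * (if ys j ∈ A then (0:ℝ) else 1) :=
          Finset.sum_congr rfl fun ys _ => hL ys
      _ = ∏ _j : Fin N, ∑ y, π₀ y * (if y ∈ A then (0:ℝ) else 1) :=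
          sum_prod_fn (fun _ y => π₀ y * (if y ∈ A then (0:ℝ) else 1))
      _ = _ := by rw [hSum, Finset.prod_const, Finset.card_univ, Fintype.card_fin]
  -- combine
  have hle : ∑ ys : Fin N → Y, (∏ j, π₀ (ys j)) * ((1:ℝ) - (if sel ys ∈ A then 1 else 0))
      ≤ ∑ ys : Fin N → Y, (∏ j, π₀ (ys j)) *
        ((∑ j, if σ/2 ≤ |δ (ys j)| then (1:ℝ) else 0) + ∏ j, (if ys j ∈ A then (0:ℝ) else 1)) := by
    apply Finset.sum_le_sum
    intro ys _
    exact mul_le_mul_of_nonneg_left (hpt ys) (hμ0 ys)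
  have hexpL : ∑ ys : Fin N → Y, (∏ j, π₀ (ys j)) * ((1:ℝ) - (if sel ys ∈ A then 1 else 0))
      = 1 - ∑ ys : Fin N → Y, (∏ j, π₀ (ys j)) * (if sel ys ∈ A then (1:ℝ) else 0) := by
    simp_rw [mul_sub, mul_one]
    rw [Finset.sum_sub_distrib, hmass]
  have hexpR : ∑ ys : Fin N → Y, (∏ j, π₀ (ys j)) *
        ((∑ j, if σ/2 ≤ |δ (ys j)| then (1:ℝ) else 0) + ∏ j, (if ys j ∈ A then (0:ℝ) else 1))
      = (∑ ys : Fin N → Y, (∏ j, π₀ (ys j)) * (∑ j, if σ/2 ≤ |δ (ys j)| then (1:ℝ) else 0))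
        + ∑ ys : Fin N → Y, (∏ j, π₀ (ys j)) * (∏ j, if ys j ∈ A then (0:ℝ) else 1) := by
    simp_rw [mul_add]
    rw [Finset.sum_add_distrib]
  rw [hexpL, hexpR, hB] at hle
  linarith


open Classical in
/-- general Best-of-N bound. With a σ-margin reward `r`, base policy `π₀`,
estimated reward `r̂` (with error `δ(x,y) = r̂(x,y) − r(x,y)`), coverage
`P₀(x) = P_{y∼π₀(·|x)}(y ∈ Y*(x))`, and a BoN selection rule `sel` returning one of the
`N` drawn responses maximizing `r̂(x,·)`, the probability that BoN outputs an element of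
the argmax set `Y*(x)` is at least
`1 − (2N/σ)·E|δ| − E_x (1−P₀(x))^N`. -/
theorem best_of_n_general_bound
    {X Y : Type*} [Fintype X] [Fintype Y] [Nonempty Y]
    (Px : X → ℝ) (hPx0 : ∀ x, 0 ≤ Px x) (hPx1 : ∑ x, Px x = 1)
    (π₀ : X → Y → ℝ) (hπ0 : ∀ x y, 0 ≤ π₀ x y) (hπ1 : ∀ x, ∑ y, π₀ x y = 1)
    (r rhat : X → Y → ℝ) (hr : ∀ x y, r x y ∈ Set.Icc (0 : ℝ) 1)
    (σ : ℝ) (hσ : 0 < σ)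
    (Ystar : X → Set Y) (hYstar : ∀ x, Ystar x = {y | ∀ y', r x y' ≤ r x y})
    (hmargin : ∀ x, ∀ y ∈ Ystar x, ∀ y', y' ∉ Ystar x → r x y' + σ < r x y)
    (N : ℕ)
    (sel : X → (Fin N → Y) → Y)
    (hsel : ∀ x ys, (∃ j, sel x ys = ys j) ∧ ∀ j, rhat x (ys j) ≤ rhat x (sel x ys)) :
    ∑ x, Px x * ∑ ys : Fin N → Y, (∏ j, π₀ x (ys j)) *
        (if sel x ys ∈ Ystar x then (1 : ℝ) else 0) ≥
      1 - ((2 * N / σ) * (∑ x, ∑ y, Px x * π₀ x y * |rhat x y - r x y|)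
            + ∑ x, Px x * (1 - ∑ y ∈ Finset.univ.filter (· ∈ Ystar x), π₀ x y) ^ N) := by
  -- pointwise inequality
  have hpt : ∀ x, ∀ ys : Fin N → Y, (1 : ℝ) - (if sel x ys ∈ Ystar x then 1 else 0) ≤
      (∑ j, if σ/2 ≤ |rhat x (ys j) - r x (ys j)| then (1:ℝ) else 0) +
        ∏ j, (if ys j ∈ Ystar x then (0:ℝ) else 1) := by
    intro x ys
    have hsum0 : (0:ℝ) ≤ ∑ j, if σ/2 ≤ |rhat x (ys j) - r x (ys j)| then (1:ℝ) else 0 :=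
      Finset.sum_nonneg fun j _ => by split <;> norm_num
    have hprod0 : (0:ℝ) ≤ ∏ j, (if ys j ∈ Ystar x then (0:ℝ) else 1) :=
      Finset.prod_nonneg fun j _ => by split <;> norm_num
    by_cases hs : sel x ys ∈ Ystar x
    · rw [if_pos hs]
      linarith
    · rw [if_neg hs]
      by_cases hall : ∀ j, ys j ∉ Ystar x
      · have hp1 : ∏ j, (if ys j ∈ Ystar x then (0:ℝ) else 1) = 1 :=
          Finset.prod_eq_one fun j _ => if_neg (hall j)
        rw [hp1]
        linarith
      · push_neg at hall
        obtain ⟨j, hj⟩ := hall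
        obtain ⟨⟨j₀, hj₀⟩, hmax⟩ := hsel x ys
        have hm := hmargin x (ys j) hj (sel x ys) hs
        have hle := hmax j
        have hσlt : σ < |rhat x (sel x ys) - r x (sel x ys)| + |rhat x (ys j) - r x (ys j)| := by
          have h1 : σ < (rhat x (sel x ys) - r x (sel x ys)) - (rhat x (ys j) - r x (ys j)) := by
            linarith
          have h2 : (rhat x (sel x ys) - r x (sel x ys)) ≤ |rhat x (sel x ys) - r x (sel x ys)| :=
            le_abs_self _
          have h3 : -(rhat x (ys j) - r x (ys j)) ≤ |rhat x (ys j) - r x (ys j)| :=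
            neg_le_abs _
          linarith
        rw [hj₀] at hσlt
        have hcase : σ/2 ≤ |rhat x (ys j₀) - r x (ys j₀)| ∨ σ/2 ≤ |rhat x (ys j) - r x (ys j)| := by
          by_contra h
          push_neg at h
          linarith [h.1, h.2]
        obtain ⟨k, hk⟩ : ∃ k, σ/2 ≤ |rhat x (ys k) - r x (ys k)| :=
          hcase.elim (fun h => ⟨j₀, h⟩) (fun h => ⟨j, h⟩)
        have h1 : (1:ℝ) ≤ ∑ j', if σ/2 ≤ |rhat x (ys j') - r x (ys j')| then (1:ℝ) else 0 := by
          calc (1:ℝ) = if σ/2 ≤ |rhat x (ys k) - r x (ys k)| then (1:ℝ) else 0 := (if_pos hk).symm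
            _ ≤ ∑ j', if σ/2 ≤ |rhat x (ys j') - r x (ys j')| then (1:ℝ) else 0 :=
              Finset.single_le_sum
                (f := fun j' => if σ/2 ≤ |rhat x (ys j') - r x (ys j')| then (1:ℝ) else 0)
                (fun i _ => by
                  by_cases h : σ/2 ≤ |rhat x (ys i) - r x (ys i)| <;> simp [h])
                (Finset.mem_univ k)
        linarith
  -- per-x bound
  have key : ∀ x, ∑ ys : Fin N → Y, (∏ j, π₀ x (ys j)) *
        (if sel x ys ∈ Ystar x then (1:ℝ) else 0) ≥
      1 - ((2 * N / σ) * (∑ y, π₀ x y * |rhat x y - r x y|) +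
        (1 - ∑ y ∈ Finset.univ.filter (· ∈ Ystar x), π₀ x y) ^ N) :=
    fun x => per_x_bound (π₀ x) (hπ0 x) (hπ1 x) (fun y => rhat x y - r x y) (Ystar x) σ hσ
      N (sel x) (hpt x)
  -- combine over x
  calc ∑ x, Px x * ∑ ys : Fin N → Y, (∏ j, π₀ x (ys j)) *
        (if sel x ys ∈ Ystar x then (1:ℝ) else 0)
      ≥ ∑ x, Px x * (1 - ((2 * N / σ) * (∑ y, π₀ x y * |rhat x y - r x y|) +
          (1 - ∑ y ∈ Finset.univ.filter (· ∈ Ystar x), π₀ x y) ^ N)) := by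
        apply Finset.sum_le_sum
        intro x _
        exact mul_le_mul_of_nonneg_left (key x) (hPx0 x)
    _ = 1 - ((2 * N / σ) * (∑ x, ∑ y, Px x * π₀ x y * |rhat x y - r x y|)
            + ∑ x, Px x * (1 - ∑ y ∈ Finset.univ.filter (· ∈ Ystar x), π₀ x y) ^ N) := by
        have hswap : ∑ x, Px x * (2 * ↑N / σ * ∑ y, π₀ x y * |rhat x y - r x y|)
            = 2 * ↑N / σ * ∑ x, ∑ y, Px x * π₀ x y * |rhat x y - r x y| := by
          simp_rw [Finset.mul_sum]
          apply Finset.sum_congr rfl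
          intro x _
          apply Finset.sum_congr rfl
          intro y _
          ring
        simp_rw [mul_sub, mul_one, mul_add]
        rw [Finset.sum_sub_distrib, hPx1, Finset.sum_add_distrib, hswap]
end

section
/- In the BoN bound with binary rewards (σ = 1, |δ(x,y)| = 1{r̂(x,y) ≠ r(x,y)}), if the verifier's misclassification error E_{x,y∼P_x×π₀}1{r̂(x,y)≠r(x,y)} ≤ ε and P₀(x) ≥ α > 0 for all x, then choosing N = −log(n)/log(1−α) gives expected BoN reward at least 1 − [ (log n / (−log(1−α))) · ε + 1/n ]. -/
/-- Sum of products over function types equals product of sums. -/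
lemma bon_aux {Y : Type*} [Fintype Y] (N : ℕ) (f : Fin N → Y → ℝ) :
    ∑ ys : Fin N → Y, ∏ j, f j (ys j) = ∏ j, ∑ y, f j y :=
  (Fintype.prod_sum f).symm

open Classical in
/-- BoN bound with binary rewards. If the verifier's misclassification
error is at most `ε`, the per-prompt coverage is at least `α > 0`, and
`N = −log(n)/log(1−α)`, then the expected BoN reward is at least
`1 − [(log n / (−log(1−α)))·ε + 1/n]`. -/
theorem best_of_n_binary_bound
    {X Y : Type*} [Fintype X] [Fintype Y] [Nonempty Y]
    (Px : X → ℝ) (hPx0 : ∀ x, 0 ≤ Px x) (hPx1 : ∑ x, Px x = 1)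
    (π₀ : X → Y → ℝ) (hπ0 : ∀ x y, 0 ≤ π₀ x y) (hπ1 : ∀ x, ∑ y, π₀ x y = 1)
    (r rhat : X → Y → Bool)
    (ε α : ℝ) (hα0 : 0 < α) (hα1 : α < 1)
    (herr : ∑ x, ∑ y, Px x * π₀ x y * (if rhat x y ≠ r x y then (1 : ℝ) else 0) ≤ ε)
    (hcov : ∀ x, α ≤ ∑ y, π₀ x y * (if r x y then (1 : ℝ) else 0))
    (n N : ℕ) (hn : 1 ≤ n)
    (hN : (N : ℝ) = -Real.log n / Real.log (1 - α))
    (sel : X → (Fin N → Y) → Y)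
    (hsel : ∀ x ys, (∃ j, sel x ys = ys j) ∧
      ((∃ j, rhat x (ys j) = true) → rhat x (sel x ys) = true)) :
    ∑ x, Px x * ∑ ys : Fin N → Y, (∏ j, π₀ x (ys j)) *
        (if r x (sel x ys) then (1 : ℝ) else 0) ≥
      1 - ((Real.log n / (-Real.log (1 - α))) * ε + 1 / n) := by
  classical
  have hm0 : ∀ x y, (0:ℝ) ≤ (if rhat x y ≠ r x y then (1:ℝ) else 0) := by
    intro x y; split <;> norm_num
  have hs0 : ∀ x y, (0:ℝ) ≤ 1 - (if r x y then (1:ℝ) else 0) := by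
    intro x y; split <;> norm_num
  have h1α : (0:ℝ) < 1 - α := by linarith
  have hlneg : Real.log (1-α) < 0 := Real.log_neg h1α (by linarith)
  have hn0 : (0:ℝ) < n := by exact_mod_cast Nat.lt_of_lt_of_le Nat.zero_lt_one hn
  -- key per-x bound
  have key : ∀ x, ∑ ys : Fin N → Y, (∏ j, π₀ x (ys j)) * (if r x (sel x ys) then (1:ℝ) else 0) ≥
      1 - ((N : ℝ) * (∑ y, π₀ x y * (if rhat x y ≠ r x y then (1:ℝ) else 0))
        + (1 - ∑ y, π₀ x y * (if r x y then (1:ℝ) else 0)) ^ N) := by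
    intro x
    set e := ∑ y, π₀ x y * (if rhat x y ≠ r x y then (1:ℝ) else 0) with he
    set c := ∑ y, π₀ x y * (if r x y then (1:ℝ) else 0) with hc
    have hw1 : ∑ ys : Fin N → Y, ∏ j, π₀ x (ys j) = 1 := by
      rw [bon_aux N (fun _ y => π₀ x y)]
      simp [hπ1 x]
    -- pointwise bound on the failure indicator
    have hpt : ∀ ys : Fin N → Y,
        1 - (if r x (sel x ys) then (1:ℝ) else 0) ≤
        (∑ j, (if rhat x (ys j) ≠ r x (ys j) then (1:ℝ) else 0))
          + ∏ j, (1 - (if r x (ys j) then (1:ℝ) else 0)) := by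
      intro ys
      have hA0 : 0 ≤ ∑ j, (if rhat x (ys j) ≠ r x (ys j) then (1:ℝ) else 0) :=
        Finset.sum_nonneg fun j _ => hm0 x (ys j)
      have hB0 : 0 ≤ ∏ j, (1 - (if r x (ys j) then (1:ℝ) else 0)) :=
        Finset.prod_nonneg fun j _ => hs0 x (ys j)
      by_cases hr : r x (sel x ys) = true
      · simp only [hr, if_pos]; linarith
      · have hrf : r x (sel x ys) = false := Bool.eq_false_iff.mpr hr
        obtain ⟨⟨j₀, hj₀⟩, hsel2⟩ := hsel x ys
        have hAone : ∀ j : Fin N, rhat x (ys j) ≠ r x (ys j) →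
            (1:ℝ) ≤ ∑ j, (if rhat x (ys j) ≠ r x (ys j) then (1:ℝ) else 0) := by
          intro j hj
          have h := Finset.single_le_sum (f := fun j => if rhat x (ys j) ≠ r x (ys j) then (1:ℝ) else 0)
            (fun j _ => hm0 x (ys j)) (Finset.mem_univ j)
          simpa [hj] using h
        by_cases hrh : ∃ j, rhat x (ys j) = true
        · have h1 : rhat x (sel x ys) = true := hsel2 hrh
          have h2 : rhat x (ys j₀) = true := by rw [← hj₀]; exact h1
          have h3 : r x (ys j₀) = false := by rw [← hj₀]; exact hrf
          have h4 := hAone j₀ (by rw [h2, h3]; simp)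
          have hL : 1 - (if r x (sel x ys) = true then (1:ℝ) else 0) = 1 := by
            rw [hrf]; norm_num
          rw [hL]; linarith
        · push_neg at hrh
          have hrall : ∀ j, rhat x (ys j) = false := fun j => Bool.eq_false_iff.mpr (hrh j)
          by_cases hex : ∃ j, r x (ys j) = true
          · obtain ⟨j, hj⟩ := hex
            have h4 := hAone j (by rw [hrall j, hj]; simp)
            have hL : 1 - (if r x (sel x ys) = true then (1:ℝ) else 0) = 1 := by
              rw [hrf]; norm_num
            rw [hL]; linarith
          · push_neg at hex
            have hall : ∀ j, r x (ys j) = false := fun j => Bool.eq_false_iff.mpr (hex j)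
            have hB1 : ∏ j, (1 - (if r x (ys j) then (1:ℝ) else 0)) = 1 := by
              simp [hall]
            have hL : 1 - (if r x (sel x ys) = true then (1:ℝ) else 0) = 1 := by
              rw [hrf]; norm_num
            rw [hL, hB1]; linarith
    -- the misclassification term
    have hA : ∑ ys : Fin N → Y, (∏ j, π₀ x (ys j)) *
        (∑ j, (if rhat x (ys j) ≠ r x (ys j) then (1:ℝ) else 0)) = (N:ℝ) * e := by
      calc ∑ ys : Fin N → Y, (∏ j, π₀ x (ys j)) *
            (∑ j, (if rhat x (ys j) ≠ r x (ys j) then (1:ℝ) else 0))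
          = ∑ ys : Fin N → Y, ∑ j, (∏ i, π₀ x (ys i)) *
              (if rhat x (ys j) ≠ r x (ys j) then (1:ℝ) else 0) := by
            simp [Finset.mul_sum]
        _ = ∑ j : Fin N, ∑ ys : Fin N → Y, (∏ i, π₀ x (ys i)) *
              (if rhat x (ys j) ≠ r x (ys j) then (1:ℝ) else 0) := Finset.sum_comm
        _ = ∑ _j : Fin N, e := by
            refine Finset.sum_congr rfl fun j _ => ?_
            calc ∑ ys : Fin N → Y, (∏ i, π₀ x (ys i)) *
                  (if rhat x (ys j) ≠ r x (ys j) then (1:ℝ) else 0)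
                = ∑ ys : Fin N → Y, ∏ i, (π₀ x (ys i) *
                    (if i = j then (if rhat x (ys i) ≠ r x (ys i) then (1:ℝ) else 0) else 1)) := by
                  refine Finset.sum_congr rfl fun ys _ => ?_
                  rw [Finset.prod_mul_distrib,
                    Finset.prod_ite_eq' Finset.univ j
                      (fun i => if rhat x (ys i) ≠ r x (ys i) then (1:ℝ) else 0)]
                  simp
              _ = ∏ i : Fin N, ∑ y, π₀ x y *
                    (if i = j then (if rhat x y ≠ r x y then (1:ℝ) else 0) else 1) :=
                  bon_aux N (fun i y => π₀ x y *
                    (if i = j then (if rhat x y ≠ r x y then (1:ℝ) else 0) else 1))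
              _ = e := by
                  have hterm : ∀ i : Fin N, (∑ y, π₀ x y *
                      (if i = j then (if rhat x y ≠ r x y then (1:ℝ) else 0) else 1))
                      = if i = j then e else 1 := by
                    intro i
                    by_cases h : i = j
                    · rw [if_pos h]
                      exact (Finset.sum_congr rfl fun y _ => by rw [if_pos h]).trans he.symm
                    · simp [h, hπ1 x]
                  rw [Finset.prod_congr rfl (fun i _ => hterm i),
                    Finset.prod_ite_eq' Finset.univ j (fun _ => e)]
                  simp
        _ = (N:ℝ) * e := by simp [mul_comm]
    -- the all-fail term
    have hB : ∑ ys : Fin N → Y, (∏ j, π₀ x (ys j)) *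
        (∏ j, (1 - (if r x (ys j) then (1:ℝ) else 0))) = (1 - c) ^ N := by
      calc ∑ ys : Fin N → Y, (∏ j, π₀ x (ys j)) *
            (∏ j, (1 - (if r x (ys j) then (1:ℝ) else 0)))
          = ∑ ys : Fin N → Y, ∏ j, (π₀ x (ys j) * (1 - (if r x (ys j) then (1:ℝ) else 0))) := by
            refine Finset.sum_congr rfl fun ys _ => Finset.prod_mul_distrib.symm
        _ = ∏ _j : Fin N, ∑ y, π₀ x y * (1 - (if r x y then (1:ℝ) else 0)) :=
            bon_aux N (fun _ y => π₀ x y * (1 - (if r x y then (1:ℝ) else 0)))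
        _ = (1 - c) ^ N := by
            have : (∑ y, π₀ x y * (1 - (if r x y then (1:ℝ) else 0))) = 1 - c := by
              simp only [mul_sub, mul_one, Finset.sum_sub_distrib, hπ1 x, hc]
            rw [this, Finset.prod_const, Finset.card_univ, Fintype.card_fin]
    have hfail : ∑ ys : Fin N → Y, (∏ j, π₀ x (ys j)) *
        (1 - (if r x (sel x ys) then (1:ℝ) else 0)) ≤ (N:ℝ) * e + (1 - c) ^ N := by
      calc ∑ ys : Fin N → Y, (∏ j, π₀ x (ys j)) *
            (1 - (if r x (sel x ys) then (1:ℝ) else 0))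
          ≤ ∑ ys : Fin N → Y, (∏ j, π₀ x (ys j)) *
              ((∑ j, (if rhat x (ys j) ≠ r x (ys j) then (1:ℝ) else 0))
                + ∏ j, (1 - (if r x (ys j) then (1:ℝ) else 0))) := by
            refine Finset.sum_le_sum fun ys _ => ?_
            exact mul_le_mul_of_nonneg_left (hpt ys)
              (Finset.prod_nonneg fun j _ => hπ0 x (ys j))
        _ = (N:ℝ) * e + (1 - c) ^ N := by
            simp only [mul_add, Finset.sum_add_distrib]
            rw [hA, hB]
    have hexp : ∑ ys : Fin N → Y, (∏ j, π₀ x (ys j)) *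
        (1 - (if r x (sel x ys) then (1:ℝ) else 0))
        = 1 - ∑ ys : Fin N → Y, (∏ j, π₀ x (ys j)) *
            (if r x (sel x ys) then (1:ℝ) else 0) := by
      simp only [mul_sub, mul_one, Finset.sum_sub_distrib, hw1]
    rw [ge_iff_le]
    linarith [hfail, hexp]
  -- assemble over x
  have hc1 : ∀ x, (∑ y, π₀ x y * (if r x y then (1:ℝ) else 0)) ≤ 1 := by
    intro x
    have hb : ∀ y, π₀ x y * (if r x y then (1:ℝ) else 0) ≤ π₀ x y := by
      intro y; by_cases h : r x y = true <;> simp [h, hπ0 x y]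
    calc (∑ y, π₀ x y * (if r x y then (1:ℝ) else 0)) ≤ ∑ y, π₀ x y :=
          Finset.sum_le_sum fun y _ => hb y
      _ = 1 := hπ1 x
  have hEe : ∑ x, Px x * (∑ y, π₀ x y * (if rhat x y ≠ r x y then (1:ℝ) else 0)) ≤ ε := by
    calc ∑ x, Px x * (∑ y, π₀ x y * (if rhat x y ≠ r x y then (1:ℝ) else 0))
        = ∑ x, ∑ y, Px x * π₀ x y * (if rhat x y ≠ r x y then (1:ℝ) else 0) := by
          refine Finset.sum_congr rfl fun x _ => ?_
          rw [Finset.mul_sum]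
          exact Finset.sum_congr rfl fun y _ => (mul_assoc _ _ _).symm
      _ ≤ ε := herr
  have hT : ∑ x, Px x * (1 - ∑ y, π₀ x y * (if r x y then (1:ℝ) else 0)) ^ N ≤ (1-α)^N := by
    calc ∑ x, Px x * (1 - ∑ y, π₀ x y * (if r x y then (1:ℝ) else 0)) ^ N
        ≤ ∑ x, Px x * (1-α)^N := by
          refine Finset.sum_le_sum fun x _ => ?_
          refine mul_le_mul_of_nonneg_left ?_ (hPx0 x)
          exact pow_le_pow_left₀ (by linarith [hc1 x]) (by linarith [hcov x]) N
      _ = (1-α)^N := by rw [← Finset.sum_mul, hPx1, one_mul]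
  have hpow : (1 - α : ℝ) ^ N = 1 / n := by
    rw [← Real.rpow_natCast, Real.rpow_def_of_pos h1α, hN, mul_comm,
      div_mul_cancel₀ _ hlneg.ne, Real.exp_neg, Real.exp_log hn0, one_div]
  have hLε : (Real.log n / (-Real.log (1-α))) * ε = (N:ℝ) * ε := by
    rw [hN, div_neg, neg_div]
  have hN0 : (0:ℝ) ≤ (N:ℝ) := Nat.cast_nonneg N
  have hNe := mul_le_mul_of_nonneg_left hEe hN0
  have hstep : ∑ x, Px x * (1 - ((N:ℝ) * (∑ y, π₀ x y * (if rhat x y ≠ r x y then (1:ℝ) else 0))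
      + (1 - ∑ y, π₀ x y * (if r x y then (1:ℝ) else 0)) ^ N))
      ≤ ∑ x, Px x * ∑ ys : Fin N → Y, (∏ j, π₀ x (ys j)) *
        (if r x (sel x ys) then (1:ℝ) else 0) :=
    Finset.sum_le_sum fun x _ => mul_le_mul_of_nonneg_left (key x) (hPx0 x)
  have hsum : ∑ x, Px x * (1 - ((N:ℝ) * (∑ y, π₀ x y * (if rhat x y ≠ r x y then (1:ℝ) else 0))
      + (1 - ∑ y, π₀ x y * (if r x y then (1:ℝ) else 0)) ^ N))
      = 1 - ((N:ℝ) * ∑ x, Px x * (∑ y, π₀ x y * (if rhat x y ≠ r x y then (1:ℝ) else 0))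
        + ∑ x, Px x * (1 - ∑ y, π₀ x y * (if r x y then (1:ℝ) else 0)) ^ N) := by
    have hpt2 : ∀ x, Px x * (1 - ((N:ℝ) * (∑ y, π₀ x y * (if rhat x y ≠ r x y then (1:ℝ) else 0))
        + (1 - ∑ y, π₀ x y * (if r x y then (1:ℝ) else 0)) ^ N))
        = Px x - ((N:ℝ) * (Px x * (∑ y, π₀ x y * (if rhat x y ≠ r x y then (1:ℝ) else 0)))
          + Px x * (1 - ∑ y, π₀ x y * (if r x y then (1:ℝ) else 0)) ^ N) := fun x => by ring
    rw [Finset.sum_congr rfl (fun x _ => hpt2 x), Finset.sum_sub_distrib,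
      Finset.sum_add_distrib, hPx1, ← Finset.mul_sum]
  rw [ge_iff_le, hLε, ← hpow]
  linarith [hstep, hsum, hT, hNe]
end

section
/- Let F be a finite class of binary reward predictors with r_{f*} ∈ F realizable by the data, and let r̂ be ERM over n i.i.d. samples. Then with probability at least 1−δ, the error of r̂ is at most log(|F|/δ)/n, and hence BoN with coverage α and N = −log(n)/log(1−α) achieves expected reward at least 1 − [ log(n)(log|F| + log(1/δ)) / (−log(1−α)·n) + 1/n ]. -/
lemma sum_fn_prod' {ι κ : Type*} [Fintype ι] [DecidableEq ι] [Fintype κ] (h : ι → κ → ℝ) :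
    ∑ g : ι → κ, ∏ i, h i (g i) = ∏ i, ∑ z, h i z :=
  (Fintype.prod_sum fun i z => h i z).symm

open Classical in
lemma pac_lemma' {Z : Type*} [Fintype Z] (D : Z → ℝ) (hD0 : ∀ z, 0 ≤ D z)
    (hD1 : ∑ z, D z = 1)
    (F : Finset (Z → Bool)) (rstar : Z → Bool) (hrstar : rstar ∈ F)
    (n : ℕ) (hn : 1 ≤ n) (δ : ℝ) (hδ0 : 0 < δ)
    (erm : (Fin n → Z) → (Z → Bool))
    (herm : ∀ s, erm s ∈ F ∧ ∀ rf ∈ F,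
      (∑ i, if erm s (s i) ≠ rstar (s i) then (1 : ℕ) else 0) ≤
      (∑ i, if rf (s i) ≠ rstar (s i) then (1 : ℕ) else 0)) :
    1 - δ ≤ ∑ s : Fin n → Z, (∏ i, D (s i)) *
      (if (∑ z, D z * (if erm s z ≠ rstar z then (1 : ℝ) else 0))
          ≤ Real.log ((F.card : ℝ) / δ) / n then (1 : ℝ) else 0) := by
  classical
  set ε : ℝ := Real.log ((F.card : ℝ) / δ) / n with hεdef
  set err : (Z → Bool) → ℝ := fun f => ∑ z, D z * (if f z ≠ rstar z then (1 : ℝ) else 0)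
    with herrdef
  have hn0 : (0 : ℝ) < n := by exact_mod_cast hn
  have hF0 : 0 < F.card := Finset.card_pos.mpr ⟨rstar, hrstar⟩
  have hF0' : (0 : ℝ) < F.card := by exact_mod_cast hF0
  have herr0 : ∀ f, 0 ≤ err f := by
    intro f
    refine Finset.sum_nonneg fun z _ => mul_nonneg (hD0 z) (by positivity)
  have herr1 : ∀ f, err f ≤ 1 := by
    intro f
    rw [← hD1]
    refine Finset.sum_le_sum fun z _ => ?_
    have : (if f z ≠ rstar z then (1:ℝ) else 0) ≤ 1 := by split <;> norm_num
    nlinarith [hD0 z]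
  have hP0 : ∀ s : Fin n → Z, 0 ≤ ∏ i, D (s i) :=
    fun s => Finset.prod_nonneg fun i _ => hD0 (s i)
  have hPsum : ∑ s : Fin n → Z, ∏ i, D (s i) = 1 := by
    rw [sum_fn_prod' (fun (_ : Fin n) (z : Z) => D z)]
    simp [hD1]
  set Fbad : Finset (Z → Bool) := F.filter (fun f => ε < err f) with hFbad
  have hpt : ∀ s : Fin n → Z, (if ε < err (erm s) then (1:ℝ) else 0) ≤
      ∑ f ∈ Fbad, ∏ i, (if f (s i) = rstar (s i) then (1:ℝ) else 0) := by
    intro s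
    have hnn : ∀ f ∈ Fbad, (0:ℝ) ≤ ∏ i, (if f (s i) = rstar (s i) then (1:ℝ) else 0) :=
      fun f _ => Finset.prod_nonneg fun i _ => by positivity
    by_cases h : ε < err (erm s)
    · rw [if_pos h]
      have hmem : erm s ∈ Fbad := Finset.mem_filter.mpr ⟨(herm s).1, h⟩
      have h2 := (herm s).2 rstar hrstar
      have h3 : (∑ i, if erm s (s i) ≠ rstar (s i) then (1:ℕ) else 0) = 0 := by
        refine Nat.le_zero.mp (h2.trans ?_)
        simp
      have hzero : ∀ i, erm s (s i) = rstar (s i) := by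
        intro i
        by_contra hne
        have := Finset.sum_eq_zero_iff.mp h3 i (Finset.mem_univ i)
        simp [hne] at this
      have hone : ∏ i, (if erm s (s i) = rstar (s i) then (1:ℝ) else 0) = 1 := by
        simp [hzero]
      calc (1:ℝ) = ∏ i, (if erm s (s i) = rstar (s i) then (1:ℝ) else 0) := hone.symm
        _ ≤ _ := Finset.single_le_sum hnn hmem
    · rw [if_neg h]
      exact Finset.sum_nonneg hnn
  have hperf : ∀ f ∈ Fbad,
      (∑ s : Fin n → Z, ∏ i, D (s i) * (if f (s i) = rstar (s i) then (1:ℝ) else 0))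
        ≤ δ / F.card := by
    intro f hf
    obtain ⟨hfF, hfε⟩ := Finset.mem_filter.mp hf
    have hq : (∑ z, D z * (if f z = rstar z then (1:ℝ) else 0)) = 1 - err f := by
      have hadd : err f + (∑ z, D z * (if f z = rstar z then (1:ℝ) else 0)) = 1 := by
        have hz : ∀ z, D z * (if f z ≠ rstar z then (1:ℝ) else 0)
            + D z * (if f z = rstar z then (1:ℝ) else 0) = D z := by
          intro z; by_cases h : f z = rstar z <;> simp [h]
        rw [herrdef, ← Finset.sum_add_distrib]
        simp_rw [hz]
        exact hD1
      linarith
    rw [sum_fn_prod' (fun (_ : Fin n) (z : Z) =>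
      D z * (if f z = rstar z then (1:ℝ) else 0))]
    simp only [hq]
    rw [Finset.prod_const, Finset.card_univ, Fintype.card_fin]
    have h1 : (1 - err f) ^ n ≤ Real.exp (-err f) ^ n :=
      pow_le_pow_left₀ (by linarith [herr1 f]) (Real.one_sub_le_exp_neg _) n
    have h2 : Real.exp (-err f) ^ n = Real.exp ((n : ℝ) * (-err f)) :=
      (Real.exp_nat_mul _ n).symm
    have h3 : Real.exp ((n : ℝ) * (-err f)) ≤ Real.exp ((n : ℝ) * (-ε)) := by
      apply Real.exp_le_exp.mpr
      have : ε ≤ err f := le_of_lt hfε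
      nlinarith
    have h4 : (n : ℝ) * (-ε) = -Real.log ((F.card : ℝ) / δ) := by
      rw [hεdef]; field_simp
    have h5 : Real.exp (-Real.log ((F.card : ℝ) / δ)) = δ / F.card := by
      rw [Real.exp_neg, Real.exp_log (by positivity), inv_div]
    calc (1 - err f) ^ n ≤ Real.exp ((n:ℝ) * (-err f)) := h2 ▸ h1
      _ ≤ Real.exp ((n:ℝ) * (-ε)) := h3
      _ = δ / F.card := by rw [h4, h5]
  have hbad : ∑ s : Fin n → Z, (∏ i, D (s i)) * (if ε < err (erm s) then (1:ℝ) else 0)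
      ≤ δ := by
    calc ∑ s : Fin n → Z, (∏ i, D (s i)) * (if ε < err (erm s) then (1:ℝ) else 0)
        ≤ ∑ s : Fin n → Z, (∏ i, D (s i)) *
            ∑ f ∈ Fbad, ∏ i, (if f (s i) = rstar (s i) then (1:ℝ) else 0) :=
          Finset.sum_le_sum fun s _ => mul_le_mul_of_nonneg_left (hpt s) (hP0 s)
      _ = ∑ f ∈ Fbad, ∑ s : Fin n → Z,
            ∏ i, D (s i) * (if f (s i) = rstar (s i) then (1:ℝ) else 0) := by
          simp_rw [Finset.mul_sum]
          rw [Finset.sum_comm]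
          refine Finset.sum_congr rfl fun f _ => Finset.sum_congr rfl fun s _ => ?_
          rw [← Finset.prod_mul_distrib]
      _ ≤ ∑ _f ∈ Fbad, δ / F.card := Finset.sum_le_sum hperf
      _ = Fbad.card * (δ / F.card) := by rw [Finset.sum_const, nsmul_eq_mul]
      _ ≤ F.card * (δ / F.card) := by
          have : (Fbad.card : ℝ) ≤ F.card := by
            exact_mod_cast Finset.card_filter_le F _
          have hpos : (0:ℝ) ≤ δ / F.card := by positivity
          nlinarith
      _ = δ := by field_simp
  have hsplit : ∀ s : Fin n → Z,
      (if err (erm s) ≤ ε then (1:ℝ) else 0) = 1 - (if ε < err (erm s) then (1:ℝ) else 0) := by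
    intro s
    by_cases h : err (erm s) ≤ ε
    · rw [if_pos h, if_neg (not_lt.mpr h)]; ring
    · rw [if_neg h, if_pos (lt_of_not_ge h)]; ring
  calc (1:ℝ) - δ
      ≤ ∑ s : Fin n → Z, (∏ i, D (s i)) - ∑ s : Fin n → Z, (∏ i, D (s i)) *
          (if ε < err (erm s) then (1:ℝ) else 0) := by rw [hPsum]; linarith
    _ = ∑ s : Fin n → Z, (∏ i, D (s i)) * (if err (erm s) ≤ ε then (1:ℝ) else 0) := by
        rw [← Finset.sum_sub_distrib]
        refine Finset.sum_congr rfl fun s _ => ?_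
        rw [hsplit s]; ring

open Classical in
lemma bon_per_x' {Y : Type*} [Fintype Y] (N : ℕ) (p : Y → ℝ) (hp0 : ∀ y, 0 ≤ p y)
    (hp1 : ∑ y, p y = 1) (rh rs : Y → Bool) (sel : (Fin N → Y) → Y)
    (hsel1 : ∀ ys, ∃ j, sel ys = ys j)
    (hsel2 : ∀ ys, (∃ j, rh (ys j) = true) → rh (sel ys) = true)
    (α : ℝ) (hα : α ≤ ∑ y, p y * (if rs y then (1:ℝ) else 0)) :
    1 - ((1 - α) ^ N + N * (∑ y, p y * (if rh y ≠ rs y then (1:ℝ) else 0))) ≤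
      ∑ ys : Fin N → Y, (∏ j, p (ys j)) * (if rs (sel ys) then (1:ℝ) else 0) := by
  classical
  set e : ℝ := ∑ y, p y * (if rh y ≠ rs y then (1:ℝ) else 0) with he
  have hW0 : ∀ ys : Fin N → Y, 0 ≤ ∏ j, p (ys j) :=
    fun ys => Finset.prod_nonneg fun j _ => hp0 _
  have hWsum : ∑ ys : Fin N → Y, ∏ j, p (ys j) = 1 := by
    rw [sum_fn_prod' (fun (_ : Fin N) (y : Y) => p y)]; simp [hp1]
  have hpt : ∀ ys : Fin N → Y, (if rs (sel ys) then (0:ℝ) else 1) ≤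
      (∏ j, (if rs (ys j) then (0:ℝ) else 1)) +
        ∑ j, (if rh (ys j) ≠ rs (ys j) then (1:ℝ) else 0) := by
    intro ys
    have hprod0 : (0:ℝ) ≤ ∏ j, (if rs (ys j) then (0:ℝ) else 1) :=
      Finset.prod_nonneg fun j _ => by positivity
    have hsum0 : (0:ℝ) ≤ ∑ j, (if rh (ys j) ≠ rs (ys j) then (1:ℝ) else 0) :=
      Finset.sum_nonneg fun j _ => by positivity
    by_cases hgood : rs (sel ys) = true
    · rw [if_pos hgood]; linarith
    · have hgood' : rs (sel ys) = false := by simpa using hgood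
      rw [if_neg (by simp [hgood'])]
      by_cases hall : ∀ j, rs (ys j) = false
      · have h1 : ∏ j, (if rs (ys j) then (0:ℝ) else 1) = 1 :=
          Finset.prod_eq_one fun j _ => by simp [hall j]
        rw [h1]; linarith
      · push_neg at hall
        obtain ⟨j, hj⟩ := hall
        have hjt : rs (ys j) = true := by simpa using hj
        have hmiss : ∃ j', rh (ys j') ≠ rs (ys j') := by
          by_cases hr : rh (ys j) = true
          · obtain ⟨j0, hj0⟩ := hsel1 ys
            have hrsel : rh (sel ys) = true := hsel2 ys ⟨j, hr⟩
            refine ⟨j0, ?_⟩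
            rw [← hj0, hrsel]
            rw [hgood']
            simp
          · exact ⟨j, by rw [hjt]; simpa using hr⟩
        obtain ⟨j', hmj⟩ := hmiss
        have h1 : (1:ℝ) ≤ ∑ j, (if rh (ys j) ≠ rs (ys j) then (1:ℝ) else 0) := by
          calc (1:ℝ) = (if rh (ys j') ≠ rs (ys j') then (1:ℝ) else 0) := by rw [if_pos hmj]
            _ ≤ _ := Finset.single_le_sum
              (f := fun k => if rh (ys k) ≠ rs (ys k) then (1:ℝ) else 0)
              (fun k _ => by by_cases hk : rh (ys k) ≠ rs (ys k) <;> simp [hk])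
              (Finset.mem_univ j')
        linarith
  have hA : ∑ ys : Fin N → Y, (∏ j, p (ys j)) * ∏ j, (if rs (ys j) then (0:ℝ) else 1)
      ≤ (1 - α) ^ N := by
    have hre : ∀ ys : Fin N → Y, (∏ j, p (ys j)) * ∏ j, (if rs (ys j) then (0:ℝ) else 1)
        = ∏ j, (p (ys j) * (if rs (ys j) then (0:ℝ) else 1)) := by
      intro ys; rw [Finset.prod_mul_distrib]
    simp_rw [hre]
    rw [sum_fn_prod' (fun (_ : Fin N) (y : Y) => p y * (if rs y then (0:ℝ) else 1))]
    rw [Finset.prod_const, Finset.card_univ, Fintype.card_fin]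
    have hq1 : (∑ y, p y * (if rs y then (0:ℝ) else 1))
        = 1 - ∑ y, p y * (if rs y then (1:ℝ) else 0) := by
      have hz : ∀ y, p y * (if rs y then (1:ℝ) else 0) + p y * (if rs y then (0:ℝ) else 1)
          = p y := fun y => by by_cases h : rs y <;> simp [h]
      have hsum : ∑ y, (p y * (if rs y then (1:ℝ) else 0)
          + p y * (if rs y then (0:ℝ) else 1)) = 1 := by simp_rw [hz]; exact hp1
      rw [Finset.sum_add_distrib] at hsum; linarith
    have hq0 : 0 ≤ ∑ y, p y * (if rs y then (0:ℝ) else 1) :=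
      Finset.sum_nonneg fun y _ => mul_nonneg (hp0 y) (by positivity)
    refine pow_le_pow_left₀ hq0 ?_ N
    rw [hq1]; linarith
  have hB : ∀ j : Fin N, ∑ ys : Fin N → Y,
      (∏ k, p (ys k)) * (if rh (ys j) ≠ rs (ys j) then (1:ℝ) else 0) = e := by
    intro j
    have hre : ∀ ys : Fin N → Y,
        (∏ k, p (ys k)) * (if rh (ys j) ≠ rs (ys j) then (1:ℝ) else 0)
        = ∏ k, (p (ys k) *
            (if k = j then (if rh (ys k) ≠ rs (ys k) then (1:ℝ) else 0) else 1)) := by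
      intro ys
      rw [Finset.prod_mul_distrib]
      congr 1
      rw [Finset.prod_ite_eq' Finset.univ j
        (fun k => if rh (ys k) ≠ rs (ys k) then (1:ℝ) else 0)]
      simp
    simp_rw [hre]
    rw [sum_fn_prod' (fun (k : Fin N) (y : Y) =>
      p y * (if k = j then (if rh y ≠ rs y then (1:ℝ) else 0) else 1))]
    have hc : ∀ k : Fin N, (∑ y, p y *
        (if k = j then (if rh y ≠ rs y then (1:ℝ) else 0) else 1)) = if k = j then e else 1 := by
      intro k
      by_cases h : k = j
      · subst h; simp only [if_pos rfl]; exact he.symm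
      · simp [h, hp1]
    simp_rw [hc]
    rw [Finset.prod_ite_eq' Finset.univ j (fun _ => e)]
    simp
  have hmain : ∑ ys : Fin N → Y, (∏ j, p (ys j)) * (if rs (sel ys) then (0:ℝ) else 1)
      ≤ (1 - α) ^ N + N * e := by
    have hBtot : ∑ ys : Fin N → Y, (∏ j, p (ys j)) *
        ∑ j, (if rh (ys j) ≠ rs (ys j) then (1:ℝ) else 0) = N * e := by
      simp_rw [Finset.mul_sum]
      rw [Finset.sum_comm]
      simp_rw [hB]
      rw [Finset.sum_const, Finset.card_univ, Fintype.card_fin, nsmul_eq_mul]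
    calc ∑ ys : Fin N → Y, (∏ j, p (ys j)) * (if rs (sel ys) then (0:ℝ) else 1)
        ≤ ∑ ys : Fin N → Y, (∏ j, p (ys j)) *
            ((∏ j, (if rs (ys j) then (0:ℝ) else 1)) +
              ∑ j, (if rh (ys j) ≠ rs (ys j) then (1:ℝ) else 0)) :=
          Finset.sum_le_sum fun ys _ => mul_le_mul_of_nonneg_left (hpt ys) (hW0 ys)
      _ = (∑ ys : Fin N → Y, (∏ j, p (ys j)) * ∏ j, (if rs (ys j) then (0:ℝ) else 1))
          + ∑ ys : Fin N → Y, (∏ j, p (ys j)) *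
              ∑ j, (if rh (ys j) ≠ rs (ys j) then (1:ℝ) else 0) := by
          simp_rw [mul_add]; rw [Finset.sum_add_distrib]
      _ ≤ (1 - α) ^ N + N * e := by rw [hBtot]; linarith
  have hgoal : ∑ ys : Fin N → Y, (∏ j, p (ys j)) * (if rs (sel ys) then (1:ℝ) else 0)
      = 1 - ∑ ys : Fin N → Y, (∏ j, p (ys j)) * (if rs (sel ys) then (0:ℝ) else 1) := by
    have hz : ∀ ys : Fin N → Y, (∏ j, p (ys j)) * (if rs (sel ys) then (1:ℝ) else 0)
        + (∏ j, p (ys j)) * (if rs (sel ys) then (0:ℝ) else 1) = ∏ j, p (ys j) := by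
      intro ys; by_cases h : rs (sel ys) <;> simp [h]
    have hsum : ∑ ys : Fin N → Y, ((∏ j, p (ys j)) * (if rs (sel ys) then (1:ℝ) else 0)
        + (∏ j, p (ys j)) * (if rs (sel ys) then (0:ℝ) else 1)) = 1 := by
      simp_rw [hz]; exact hWsum
    rw [Finset.sum_add_distrib] at hsum; linarith
  linarith [hmain, hgoal.ge, hgoal.le]

open Classical in
/-- finite-class realizable reward learning + BoN. With probability at
least `1−δ` over `n` i.i.d. samples, the ERM `r̂` over the finite class `F ∋ r_{f*}`
has error at most `log(|F|/δ)/n`, and BoN with coverage `α` and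
`N = −log(n)/log(1−α)` has expected reward at least
`1 − [log(n)(log|F| + log(1/δ))/(−log(1−α)·n) + 1/n]`. -/
theorem finite_class_erm_reward_and_bon
    {X Y : Type*} [Fintype X] [Fintype Y] [Nonempty X] [Nonempty Y]
    (Px : X → ℝ) (hPx0 : ∀ x, 0 ≤ Px x) (hPx1 : ∑ x, Px x = 1)
    (π₀ : X → Y → ℝ) (hπ0 : ∀ x y, 0 ≤ π₀ x y) (hπ1 : ∀ x, ∑ y, π₀ x y = 1)
    (F : Finset (X × Y → Bool)) (rstar : X × Y → Bool) (hrstar : rstar ∈ F)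
    (n N : ℕ) (hn : 1 ≤ n) (δ α : ℝ) (hδ0 : 0 < δ) (hδ1 : δ < 1)
    (hα0 : 0 < α) (hα1 : α < 1)
    (hcov : ∀ x, α ≤ ∑ y, π₀ x y * (if rstar (x, y) then (1 : ℝ) else 0))
    (hN : (N : ℝ) = -Real.log n / Real.log (1 - α))
    (erm : (Fin n → X × Y) → (X × Y → Bool))
    (herm : ∀ s, erm s ∈ F ∧ ∀ rf ∈ F,
      (∑ i, if erm s (s i) ≠ rstar (s i) then (1 : ℕ) else 0) ≤
      (∑ i, if rf (s i) ≠ rstar (s i) then (1 : ℕ) else 0))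
    (sel : (X × Y → Bool) → X → (Fin N → Y) → Y)
    (hsel : ∀ rh x ys, (∃ j, sel rh x ys = ys j) ∧
      ((∃ j, rh (x, ys j) = true) → rh (x, sel rh x ys) = true)) :
    ∑ s : Fin n → X × Y, (∏ i, Px (s i).1 * π₀ (s i).1 (s i).2) *
      (if ((∑ x, ∑ y, Px x * π₀ x y * (if erm s (x, y) ≠ rstar (x, y) then (1 : ℝ) else 0))
              ≤ Real.log ((F.card : ℝ) / δ) / n
            ∧ (∑ x, Px x * ∑ ys : Fin N → Y, (∏ j, π₀ x (ys j)) *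
                  (if rstar (x, sel (erm s) x ys) then (1 : ℝ) else 0)) ≥
              1 - (Real.log n * (Real.log (F.card) + Real.log (1 / δ)) /
                     (-Real.log (1 - α) * n) + 1 / n))
        then (1 : ℝ) else 0) ≥ 1 - δ := by
  classical
  have hn0 : (0:ℝ) < n := by exact_mod_cast hn
  have hF0 : 0 < F.card := Finset.card_pos.mpr ⟨rstar, hrstar⟩
  have hF0' : (0:ℝ) < F.card := by exact_mod_cast hF0
  have hlogα : Real.log (1 - α) < 0 := Real.log_neg (by linarith) (by linarith)
  have hD0 : ∀ z : X × Y, 0 ≤ Px z.1 * π₀ z.1 z.2 := fun z => mul_nonneg (hPx0 _) (hπ0 _ _)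
  have hD1 : ∑ z : X × Y, Px z.1 * π₀ z.1 z.2 = 1 := by
    rw [Fintype.sum_prod_type]
    simp_rw [← Finset.mul_sum, hπ1, mul_one]
    exact hPx1
  have hcond : ∀ f : X × Y → Bool,
      (∑ z : X × Y, Px z.1 * π₀ z.1 z.2 * (if f z ≠ rstar z then (1:ℝ) else 0))
      = (∑ x, ∑ y, Px x * π₀ x y * (if f (x, y) ≠ rstar (x, y) then (1:ℝ) else 0)) := by
    intro f
    rw [Fintype.sum_prod_type]
  -- Step B: small error implies the BoN guarantee
  have hstepB : ∀ s : Fin n → X × Y,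
      (∑ x, ∑ y, Px x * π₀ x y * (if erm s (x, y) ≠ rstar (x, y) then (1:ℝ) else 0))
        ≤ Real.log ((F.card : ℝ) / δ) / n →
      (∑ x, Px x * ∑ ys : Fin N → Y, (∏ j, π₀ x (ys j)) *
          (if rstar (x, sel (erm s) x ys) then (1:ℝ) else 0)) ≥
        1 - (Real.log n * (Real.log (F.card) + Real.log (1 / δ)) /
               (-Real.log (1 - α) * n) + 1 / n) := by
    intro s hs
    have hT : Real.log n * (Real.log (F.card) + Real.log (1 / δ)) /
        (-Real.log (1 - α) * n) = (N:ℝ) * (Real.log ((F.card : ℝ) / δ) / n) := by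
      rw [hN]
      have hlog : Real.log ((F.card:ℝ) / δ) = Real.log (F.card) + Real.log (1/δ) := by
        rw [Real.log_div (ne_of_gt hF0') (ne_of_gt hδ0), one_div, Real.log_inv]
        ring
      rw [hlog]
      field_simp
    have hpow : ((1:ℝ) - α) ^ N = 1 / n := by
      have h1 : ((1:ℝ) - α) ^ N = Real.exp ((N:ℝ) * Real.log (1 - α)) := by
        rw [Real.exp_nat_mul, Real.exp_log (by linarith)]
      rw [h1, hN, div_mul_cancel₀ _ (ne_of_lt hlogα), Real.exp_neg,
        Real.exp_log hn0, one_div]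
    have hx : ∀ x, 1 - (((1:ℝ) - α)^N
          + N * (∑ y, π₀ x y * (if erm s (x,y) ≠ rstar (x,y) then (1:ℝ) else 0)))
        ≤ ∑ ys : Fin N → Y, (∏ j, π₀ x (ys j)) *
            (if rstar (x, sel (erm s) x ys) then (1:ℝ) else 0) := fun x =>
      bon_per_x' N (π₀ x) (hπ0 x) (hπ1 x) (fun y => erm s (x, y)) (fun y => rstar (x, y))
        (sel (erm s) x) (fun ys => (hsel (erm s) x ys).1)
        (fun ys h => (hsel (erm s) x ys).2 h) α (hcov x)
    have herrs : ∑ x, Px x *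
        (∑ y, π₀ x y * (if erm s (x,y) ≠ rstar (x,y) then (1:ℝ) else 0))
          ≤ Real.log ((F.card : ℝ) / δ) / n := by
      calc ∑ x, Px x * (∑ y, π₀ x y * (if erm s (x,y) ≠ rstar (x,y) then (1:ℝ) else 0))
          = ∑ x, ∑ y, Px x * π₀ x y * (if erm s (x, y) ≠ rstar (x, y) then (1:ℝ) else 0) := by
            refine Finset.sum_congr rfl fun x _ => ?_
            rw [Finset.mul_sum]
            exact Finset.sum_congr rfl fun y _ => by ring
        _ ≤ _ := hs
    have hsum2 : ∑ x, Px x * (1 - (((1:ℝ) - α)^N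
          + N * (∑ y, π₀ x y * (if erm s (x,y) ≠ rstar (x,y) then (1:ℝ) else 0))))
        = (1 - ((1:ℝ) - α)^N) - N * ∑ x, Px x *
            (∑ y, π₀ x y * (if erm s (x,y) ≠ rstar (x,y) then (1:ℝ) else 0)) := by
      have hz : ∀ x, Px x * (1 - (((1:ℝ) - α)^N
            + N * (∑ y, π₀ x y * (if erm s (x,y) ≠ rstar (x,y) then (1:ℝ) else 0))))
          = Px x - Px x * ((1:ℝ) - α)^N
            - (N:ℝ) * (Px x * (∑ y, π₀ x y *
                (if erm s (x,y) ≠ rstar (x,y) then (1:ℝ) else 0))) := fun x => by ring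
      simp_rw [hz]
      rw [Finset.sum_sub_distrib, Finset.sum_sub_distrib, ← Finset.sum_mul,
        ← Finset.mul_sum, hPx1]
      ring
    rw [ge_iff_le, hT]
    have hNε : (N:ℝ) * (∑ x, Px x *
        (∑ y, π₀ x y * (if erm s (x,y) ≠ rstar (x,y) then (1:ℝ) else 0)))
          ≤ (N:ℝ) * (Real.log ((F.card : ℝ) / δ) / n) :=
      mul_le_mul_of_nonneg_left herrs (Nat.cast_nonneg N)
    calc 1 - ((N:ℝ) * (Real.log ((F.card : ℝ) / δ) / n) + 1 / n)
        ≤ ∑ x, Px x * (1 - (((1:ℝ) - α)^N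
            + N * (∑ y, π₀ x y * (if erm s (x,y) ≠ rstar (x,y) then (1:ℝ) else 0)))) := by
          rw [hsum2, hpow]; linarith
      _ ≤ ∑ x, Px x * ∑ ys : Fin N → Y, (∏ j, π₀ x (ys j)) *
            (if rstar (x, sel (erm s) x ys) then (1:ℝ) else 0) :=
          Finset.sum_le_sum fun x _ => mul_le_mul_of_nonneg_left (hx x) (hPx0 x)
  -- combine with the PAC bound
  have key := pac_lemma' (fun z : X × Y => Px z.1 * π₀ z.1 z.2) hD0 hD1 F rstar hrstar
    n hn δ hδ0 erm herm
  rw [ge_iff_le]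
  refine key.trans (le_of_eq (Finset.sum_congr rfl fun s _ => ?_))
  congr 1
  by_cases h : (∑ x, ∑ y, Px x * π₀ x y *
      (if erm s (x, y) ≠ rstar (x, y) then (1:ℝ) else 0)) ≤ Real.log ((F.card : ℝ) / δ) / n
  · rw [if_pos (show (∑ z : X × Y, Px z.1 * π₀ z.1 z.2 *
        (if erm s z ≠ rstar z then (1:ℝ) else 0)) ≤ Real.log ((F.card : ℝ) / δ) / n from by
          rw [hcond (erm s)]; exact h),
      if_pos ⟨h, hstepB s h⟩]
  · rw [if_neg (show ¬((∑ z : X × Y, Px z.1 * π₀ z.1 z.2 *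
        (if erm s z ≠ rstar z then (1:ℝ) else 0)) ≤ Real.log ((F.card : ℝ) / δ) / n) from by
          rw [hcond (erm s)]; exact h),
      if_neg (fun hc => h hc.1)]
end

section
/- There exists a finite class F = {f₁, f₂} of next-token predictors on bit strings, a point mass P_x on the prompt (0,1), and a target f* with f*^AR((0,1)) = (0,0,...,0) (length T ≥ 2) such that: (i) sup_{f∈F} E_{P_x} r_{f*}(x, f^AR(x)) = 1 for the end-token reward, yet (ii) for every n ≥ 1, with probability 1 over training data D_n = (x_i, f*^AR(x_i))_{i=1}^n, the next-token-prediction ERM f̂_ntp over F satisfies E_{P_x} r_{f*}(x, f̂_ntp^AR(x)) = 0. -/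
def g1 (σ : List Bool) : Bool := σ.getLastD false
def g2 (σ : List Bool) : Bool := σ.count true == 1

lemma getLastD_replicate (b d : Bool) : ∀ k, 1 ≤ k → (List.replicate k b).getLastD d = b := by
  intro k hk
  induction k with
  | zero => omega
  | succ k ih => rw [List.replicate_succ', List.getLastD_concat]

lemma arList_star : ∀ k, arList (fun _ => false) [false, true] k = List.replicate k false := by
  intro k
  induction k with
  | zero => rfl
  | succ k ih => simp [arList, ih, List.replicate_succ']

lemma g1_input : ∀ k, g1 ([false, true] ++ List.replicate k true) = true := by
  intro k
  cases k with
  | zero => rfl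
  | succ k =>
      simp only [g1, List.replicate_succ', ← List.append_assoc, List.getLastD_concat]

lemma arList_g1 : ∀ k, arList g1 [false, true] k = List.replicate k true := by
  intro k
  induction k with
  | zero => rfl
  | succ k ih =>
      simp only [arList, ih]
      rw [show ([false, true] : List Bool) ++ List.replicate k true = [false,true] ++ List.replicate k true from rfl, g1_input, List.replicate_succ']

lemma arList_g2 : ∀ k, 1 ≤ k → arList g2 [false, true] k = true :: List.replicate (k - 1) false := by
  intro k hk
  induction k with
  | zero => omega
  | succ k ih =>
      cases Nat.eq_or_lt_of_le hk with
      | inl h =>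
          have hk0 : k = 0 := by omega
          subst hk0
          simp [arList, g2]
      | inr h =>
          have hk1 : 1 ≤ k := by omega
          have := ih hk1
          simp only [arList, this]
          have hc : g2 ([false, true] ++ true :: List.replicate (k - 1) false) = false := by
            simp [g2, List.count_append, List.count_cons, List.count_replicate]
          rw [hc]
          have : k + 1 - 1 = (k - 1) + 1 := by omega
          rw [this, List.replicate_succ']
          simp

lemma getD_rep (T t : ℕ) : (List.replicate T false).getD t false = false := by
  rcases lt_or_ge t T with h | h
  · rw [List.getD_eq_getElem _ _ (by simpa using h)]
    simp
  · rw [List.getD_eq_default _ _ (by simpa using h)]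

lemma sum_g1 (T : ℕ) (hT : 1 ≤ T) :
    (∑ t ∈ Finset.range T,
      if g1 ([false, true] ++ (List.replicate T false).take t) ≠ (List.replicate T false).getD t false
      then (1 : ℕ) else 0) = 1 := by
  have hcong : ∀ t ∈ Finset.range T,
      (if g1 ([false, true] ++ (List.replicate T false).take t) ≠ (List.replicate T false).getD t false
      then (1 : ℕ) else 0) = if t = 0 then 1 else 0 := by
    intro t ht
    have ht' : t ≤ T := le_of_lt (Finset.mem_range.mp ht)
    rw [List.take_replicate, min_eq_left ht', getD_rep]
    cases t with
    | zero => simp [g1]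
    | succ t =>
        have : g1 ([false, true] ++ List.replicate (t+1) false) = false := by
          simp only [g1, List.replicate_succ', ← List.append_assoc, List.getLastD_concat]
        rw [this]
        simp
  rw [Finset.sum_congr rfl hcong, Finset.sum_ite_eq' (Finset.range T) 0 (fun _ => (1:ℕ))]
  simp [Finset.mem_range]
  omega

lemma sum_g2 (T : ℕ) :
    (∑ t ∈ Finset.range T,
      if g2 ([false, true] ++ (List.replicate T false).take t) ≠ (List.replicate T false).getD t false
      then (1 : ℕ) else 0) = T := by
  have hcong : ∀ t ∈ Finset.range T,
      (if g2 ([false, true] ++ (List.replicate T false).take t) ≠ (List.replicate T false).getD t false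
      then (1 : ℕ) else 0) = 1 := by
    intro t ht
    rw [List.take_replicate]
    have : g2 ([false, true] ++ List.replicate (min t T) false) = true := by
      simp [g2, List.count_append, List.count_replicate]
    rw [this, getD_rep]
    simp
  rw [Finset.sum_congr rfl hcong]
  simp

/-- there is a two-element class `F = {f₁, f₂}`, a point-mass prompt
distribution on `x₀ = (0,1)` and a target `f*` with `f*^AR(x₀) = 0^T`, such that some
member of `F` attains end-token reward 1, yet for every sample size `n ≥ 1` (with
probability 1, since the data `(x₀, f*^AR(x₀))` is deterministic) every next-token
ERM over `F` has end-token reward 0. -/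
theorem sft_fails_agnostic (T : ℕ) (hT : 2 ≤ T) :
    ∃ (f₁ f₂ fstar : List Bool → Bool) (x₀ : List Bool),
      f₁ ≠ f₂ ∧ x₀ = [false, true] ∧
      arList fstar x₀ T = List.replicate T false ∧
      (∃ f ∈ ({f₁, f₂} : Set (List Bool → Bool)),
        (arList f x₀ T).getLastD true = (arList fstar x₀ T).getLastD true) ∧
      (∀ n : ℕ, 1 ≤ n → ∀ fhat ∈ ({f₁, f₂} : Set (List Bool → Bool)),
        (∀ g ∈ ({f₁, f₂} : Set (List Bool → Bool)),
          (∑ _i ∈ Finset.range n, ∑ t ∈ Finset.range T,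
            if fhat (x₀ ++ (arList fstar x₀ T).take t) ≠ (arList fstar x₀ T).getD t false
            then (1 : ℕ) else 0) ≤
          (∑ _i ∈ Finset.range n, ∑ t ∈ Finset.range T,
            if g (x₀ ++ (arList fstar x₀ T).take t) ≠ (arList fstar x₀ T).getD t false
            then (1 : ℕ) else 0)) →
        (arList fhat x₀ T).getLastD true ≠ (arList fstar x₀ T).getLastD true) := by
  refine ⟨g1, g2, fun _ => false, [false, true], ?_, rfl, arList_star T, ?_, ?_⟩
  · intro h
    exact absurd (congrFun h [true, false]) (by decide)
  · refine ⟨g2, Set.mem_insert_of_mem _ rfl, ?_⟩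
    rw [arList_g2 T (by omega), arList_star T, List.getLastD_cons,
      getLastD_replicate false true (T - 1) (by omega),
      getLastD_replicate false true T (by omega)]
  · intro n hn fhat hmem hmin
    rw [arList_star T] at hmin
    rw [arList_star T, getLastD_replicate false true T (by omega)]
    rcases hmem with h | h
    · subst h
      rw [arList_g1 T, getLastD_replicate true true T (by omega)]
      simp
    · subst h
      have hle := hmin g1 (Set.mem_insert _ _)
      simp only [sum_g2 T, sum_g1 T (by omega), Finset.sum_const, Finset.card_range,
        smul_eq_mul, mul_one] at hle
      have : T ≤ 1 := Nat.le_of_mul_le_mul_left (by simpa [Nat.mul_comm] using hle) (by omega)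
      omega
end

section
/- Let F be a class of next-token predictors with VC(F) = d, f* ∈ F, and r_{f*} any reward with 1 − r_{f*}(x, y) ≤ 1{f*^AR(x) ≠ y}. Then with probability at least 1−δ over n i.i.d. samples (x_i, f*^AR(x_i)), the SFT estimator satisfies E_{P_x} r_{f*}(x, f̂_ntp^AR(x)) ≥ 1 − c·(d·log(T)·log(n) + log(1/δ))/n for a universal constant c. -/
set_option linter.dupNamespace false
set_option linter.unusedSectionVars false

namespace RSFT
open Finset

open Finset

lemma arList_length (f : List Bool → Bool) (x : List Bool) (T : ℕ) :
    (arList f x T).length = T := by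
  induction T with
  | zero => rfl
  | succ T ih => simp [arList, ih]

lemma arList_take (f : List Bool → Bool) (x : List Bool) {t T : ℕ} (h : t ≤ T) :
    (arList f x T).take t = arList f x t := by
  induction T with
  | zero => simp_all [arList, Nat.le_zero.1 h]
  | succ T ih =>
    rcases Nat.lt_or_ge t (T+1) with h' | h'
    · have ht : t ≤ T := Nat.lt_succ_iff.1 h'
      rw [arList, List.take_append_of_le_length (by rw [arList_length]; exact ht), ih ht]
    · have : t = T + 1 := le_antisymm h h'
      subst this
      rw [List.take_of_length_le (by rw [arList_length])]

lemma arList_getD (f : List Bool → Bool) (x : List Bool) {t T : ℕ} (h : t < T) :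
    (arList f x T).getD t false = f (x ++ arList f x t) := by
  induction T with
  | zero => omega
  | succ T ih =>
    rcases Nat.lt_or_ge t T with h' | h'
    · rw [arList, List.getD_append _ _ _ _ (by rw [arList_length]; exact h'), ih h']
    · have : t = T := by omega
      subst this
      rw [arList, List.getD_eq_getElem?_getD, List.getElem?_append_right (by rw [arList_length])]
      simp [arList_length]

lemma arList_eq_of_agree (f g : List Bool → Bool) (x : List Bool) (T : ℕ)
    (h : ∀ t < T, f (x ++ arList g x t) = g (x ++ arList g x t)) :
    arList f x T = arList g x T := by
  induction T with
  | zero => rfl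
  | succ T ih =>
    have hT : arList f x T = arList g x T := ih fun t ht => h t (by omega)
    rw [arList, arList, hT, h T (by omega)]

lemma arList_eq_iff (f g : List Bool → Bool) (x : List Bool) (T : ℕ) :
    arList f x T = arList g x T ↔
      ∀ t < T, f (x ++ arList g x t) = g (x ++ arList g x t) := by
  constructor
  · intro he t ht
    have h1 : (arList f x T).getD t false = f (x ++ arList f x t) := arList_getD f x ht
    have h2 : (arList g x T).getD t false = g (x ++ arList g x t) := arList_getD g x ht
    have htake : arList f x t = arList g x t := by
      rw [← arList_take f x ht.le, ← arList_take g x ht.le, he]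
    rw [he, h2] at h1
    rw [← htake] at h1 ⊢
    exact h1.symm
  · exact arList_eq_of_agree f g x T


open Finset

variable {X : Type} [Fintype X] {n : ℕ}

/-- product weight -/
def W (Px : X → ℝ) (s : Fin n → X) : ℝ := ∏ i, Px (s i)

lemma Efactor (q : Fin n → X → ℝ) :
    ∑ s : Fin n → X, ∏ i, q i (s i) = ∏ i, ∑ x, q i x := by
  classical
  rw [Finset.prod_univ_sum]
  exact (Finset.sum_congr (by simp [Fintype.piFinset_univ]) fun _ _ => rfl).symm

/-- expectation of a product over a subset of coordinates factorizes -/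
lemma EprodJ (Px : X → ℝ) (h1 : ∑ x, Px x = 1) (J : Finset (Fin n)) (φ : Fin n → X → ℝ) :
    ∑ s : Fin n → X, W Px s * ∏ i ∈ J, φ i (s i)
      = ∏ i ∈ J, ∑ x, Px x * φ i x := by
  classical
  have key := Efactor (fun i x => Px x * (if i ∈ J then φ i x else 1))
  beta_reduce at key
  calc ∑ s : Fin n → X, W Px s * ∏ i ∈ J, φ i (s i)
      = ∑ s : Fin n → X, ∏ i, (Px (s i) * (if i ∈ J then φ i (s i) else 1)) := by
        refine Finset.sum_congr rfl fun s _ => ?_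
        rw [Finset.prod_mul_distrib]
        congr 1
        rw [Finset.prod_ite_mem Finset.univ J fun i => φ i (s i), Finset.univ_inter]
    _ = ∏ i, ∑ x, Px x * (if i ∈ J then φ i x else 1) := key
    _ = ∏ i ∈ J, ∑ x, Px x * φ i x := by
        rw [← Finset.prod_subset (Finset.subset_univ J)
          (f := fun i => ∑ x, Px x * (if i ∈ J then φ i x else 1))
          (by intro i _ hi; simp [hi, h1])]
        exact Finset.prod_congr rfl fun i hi => by simp [hi]

lemma sum_W (Px : X → ℝ) (h1 : ∑ x, Px x = 1) : ∑ s : Fin n → X, W Px s = 1 := by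
  have := EprodJ Px h1 (∅ : Finset (Fin n)) (fun _ _ => 1)
  simpa using this

omit [Fintype X] in
lemma W_nonneg (Px : X → ℝ) (hPx : ∀ x, 0 ≤ Px x) (s : Fin n → X) : 0 ≤ W Px s :=
  Finset.prod_nonneg fun i _ => hPx (s i)

lemma E1 (Px : X → ℝ) (h1 : ∑ x, Px x = 1) (i : Fin n) (φ : X → ℝ) :
    ∑ s : Fin n → X, W Px s * φ (s i) = ∑ x, Px x * φ x := by
  have := EprodJ Px h1 ({i} : Finset (Fin n)) (fun _ x => φ x)
  simpa using this

lemma E2 (Px : X → ℝ) (h1 : ∑ x, Px x = 1) {i j : Fin n} (hij : i ≠ j) (φ ψ : X → ℝ) :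
    ∑ s : Fin n → X, W Px s * (φ (s i) * ψ (s j))
      = (∑ x, Px x * φ x) * (∑ x, Px x * ψ x) := by
  classical
  have := EprodJ Px h1 ({i, j} : Finset (Fin n)) (fun l x => if l = i then φ x else ψ x)
  simp only [Finset.prod_pair hij] at this
  simpa [Ne.symm hij] using this


open Finset

variable {X : Type} [Fintype X] {n : ℕ}

/-- true-mass of a Boolean function -/
def mu (Px : X → ℝ) (g : X → Bool) : ℝ := ∑ x, Px x * (if g x then 1 else 0)

/-- number of true-points in a sample, as a real -/
def cnt (g : X → Bool) (s : Fin n → X) : ℝ := ∑ i, (if g (s i) then (1:ℝ) else 0)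

lemma mu_nonneg (Px : X → ℝ) (hPx : ∀ x, 0 ≤ Px x) (g : X → Bool) : 0 ≤ mu Px g :=
  Finset.sum_nonneg fun x _ => mul_nonneg (hPx x) (by positivity)

lemma mu_le_one (Px : X → ℝ) (hPx : ∀ x, 0 ≤ Px x) (h1 : ∑ x, Px x = 1) (g : X → Bool) :
    mu Px g ≤ 1 := by
  rw [← h1]
  refine Finset.sum_le_sum fun x _ => ?_
  by_cases h : g x <;> simp [mu, h, hPx x]

lemma var_cnt (Px : X → ℝ) (h1 : ∑ x, Px x = 1) (g : X → Bool) :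
    ∑ s : Fin n → X, W Px s * (cnt g s - n * mu Px g)^2
      = n * mu Px g * (1 - mu Px g) := by
  classical
  set φ : X → ℝ := fun x => if g x then 1 else 0 with hφ
  have hμ : mu Px g = ∑ x, Px x * φ x := rfl
  have hsq : ∀ s : Fin n → X, ∑ i, ∑ j, (W Px s * (φ (s i) * φ (s j)))
      = W Px s * (cnt g s)^2 := by
    intro s
    rw [show (cnt g s)^2 = (∑ i, φ (s i)) * (∑ j, φ (s j)) by rw [sq]; rfl,
      Finset.sum_mul_sum]
    rw [Finset.mul_sum]
    refine Finset.sum_congr rfl fun i _ => ?_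
    rw [Finset.mul_sum]
  have Ecnt2 : ∑ s : Fin n → X, W Px s * (cnt g s)^2
      = n * mu Px g + (n^2 - n) * (mu Px g)^2 := by
    calc ∑ s : Fin n → X, W Px s * (cnt g s)^2
        = ∑ s : Fin n → X, ∑ i, ∑ j, (W Px s * (φ (s i) * φ (s j))) := by
          exact (Finset.sum_congr rfl fun s _ => hsq s).symm
      _ = ∑ i, ∑ j : Fin n, ∑ s : Fin n → X, (W Px s * (φ (s i) * φ (s j))) := by
          rw [Finset.sum_comm]
          exact Finset.sum_congr rfl fun i _ => Finset.sum_comm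
      _ = ∑ i, ∑ j : Fin n, (if i = j then mu Px g else (mu Px g)^2) := by
          refine Finset.sum_congr rfl fun i _ => Finset.sum_congr rfl fun j _ => ?_
          by_cases hij : i = j
          · subst hij
            have hphi : ∀ x, φ x * φ x = φ x := by
              intro x; by_cases h : g x <;> simp [hφ, h]
            rw [show (fun s : Fin n → X => W Px s * (φ (s i) * φ (s i)))
                = fun s => W Px s * φ (s i) from funext fun s => by rw [hphi], E1 Px h1 i φ]
            simp [hμ]
          · rw [if_neg hij, E2 Px h1 hij φ φ, hμ, sq]
      _ = ∑ i : Fin n, ∑ j : Fin n,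
            ((mu Px g)^2 + (if i = j then mu Px g - (mu Px g)^2 else 0)) := by
          refine Finset.sum_congr rfl fun i _ => Finset.sum_congr rfl fun j _ => ?_
          by_cases hij : i = j <;> simp [hij]
      _ = n * mu Px g + (n^2 - n) * (mu Px g)^2 := by
          simp [Finset.sum_add_distrib, Finset.sum_ite_eq, Finset.card_univ]
          ring
  have Ecnt : ∑ s : Fin n → X, W Px s * cnt g s = n * mu Px g := by
    calc ∑ s : Fin n → X, W Px s * cnt g s
        = ∑ s : Fin n → X, ∑ i, W Px s * φ (s i) := by
          refine Finset.sum_congr rfl fun s _ => ?_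
          rw [cnt, Finset.mul_sum]
      _ = ∑ i : Fin n, ∑ s : Fin n → X, W Px s * φ (s i) := Finset.sum_comm
      _ = n * mu Px g := by
          rw [Finset.sum_congr rfl fun (i : Fin n) _ => E1 Px h1 i φ, Finset.sum_const,
            Finset.card_univ, Fintype.card_fin, nsmul_eq_mul, hμ]
  have EW : ∑ s : Fin n → X, W Px s = 1 := sum_W Px h1
  have expand : ∀ s : Fin n → X, W Px s * (cnt g s - n * mu Px g)^2
      = W Px s * (cnt g s)^2 - (2 * (n * mu Px g)) * (W Px s * cnt g s)
        + (n * mu Px g)^2 * W Px s := by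
    intro s; ring
  rw [Finset.sum_congr rfl fun s _ => expand s, Finset.sum_add_distrib,
    Finset.sum_sub_distrib, ← Finset.mul_sum, ← Finset.mul_sum, Ecnt2, Ecnt, EW]
  ring


lemma cheby (Px : X → ℝ) (hPx : ∀ x, 0 ≤ Px x) (h1 : ∑ x, Px x = 1)
    (g : X → Bool) (ε : ℝ) (hεμ : ε ≤ mu Px g) (h8 : 8 ≤ (n:ℝ) * ε) :
    (1/2 : ℝ) ≤ ∑ s : Fin n → X, W Px s *
      (if ((⌈(n:ℝ)*ε/4⌉₊ : ℝ)) ≤ cnt g s then 1 else 0) := by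
  classical
  set μ := mu Px g with hμdef
  set K : ℝ := ((⌈(n:ℝ)*ε/4⌉₊ : ℕ) : ℝ) with hK
  have hn0 : n ≠ 0 := by rintro rfl; norm_num at h8
  have hn : 0 < (n:ℝ) := by exact_mod_cast Nat.pos_of_ne_zero hn0
  have hε : 0 < ε := by by_contra h; push_neg at h; nlinarith
  have hμpos : 0 < μ := lt_of_lt_of_le hε hεμ
  have hμ1 : μ ≤ 1 := mu_le_one Px hPx h1 g
  have h8μ : 8 ≤ (n:ℝ) * μ := le_trans h8 (by nlinarith)
  have hsplit : (∑ s : Fin n → X, W Px s * (if K ≤ cnt g s then (1:ℝ) else 0))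
      + (∑ s : Fin n → X, W Px s * (if K ≤ cnt g s then (0:ℝ) else 1)) = 1 := by
    have e1 : ∀ s : Fin n → X, W Px s * (if K ≤ cnt g s then (1:ℝ) else 0)
        + W Px s * (if K ≤ cnt g s then (0:ℝ) else 1) = W Px s := by
      intro s; by_cases h : K ≤ cnt g s <;> simp [h]
    rw [← Finset.sum_add_distrib, Finset.sum_congr rfl fun s _ => e1 s, sum_W Px h1]
  have hpt : ∀ s : Fin n → X, W Px s * (if K ≤ cnt g s then (0:ℝ) else 1)
      ≤ W Px s * ((cnt g s - n*μ)^2 / ((n:ℝ)*μ/2)^2) := by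
    intro s
    refine mul_le_mul_of_nonneg_left ?_ (W_nonneg Px hPx s)
    by_cases h : K ≤ cnt g s
    · rw [if_pos h]; positivity
    · rw [if_neg h]
      push_neg at h
      have h1' : K < (n:ℝ)*ε/4 + 1 := by
        rw [hK]; exact Nat.ceil_lt_add_one (by positivity)
      have hnεμ : (n:ℝ)*ε ≤ (n:ℝ)*μ := by nlinarith
      have hcnt : cnt g s < (n:ℝ)*μ/2 := by nlinarith
      have h2 : ((n:ℝ)*μ/2)^2 ≤ (cnt g s - (n:ℝ)*μ)^2 := by nlinarith
      rw [le_div_iff₀ (by positivity)]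
      linarith
  have hbound : ∑ s : Fin n → X, W Px s * (if K ≤ cnt g s then (0:ℝ) else 1) ≤ 1/2 := by
    calc ∑ s : Fin n → X, W Px s * (if K ≤ cnt g s then (0:ℝ) else 1)
        ≤ ∑ s : Fin n → X, W Px s * ((cnt g s - n*μ)^2 / ((n:ℝ)*μ/2)^2) :=
          Finset.sum_le_sum fun s _ => hpt s
      _ = (∑ s : Fin n → X, W Px s * (cnt g s - n*μ)^2) / ((n:ℝ)*μ/2)^2 := by
          rw [Finset.sum_div]
          exact Finset.sum_congr rfl fun s _ => (mul_div_assoc _ _ _).symm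
      _ = ((n:ℝ) * μ * (1 - μ)) / ((n:ℝ)*μ/2)^2 := by rw [var_cnt Px h1 g]
      _ ≤ 1/2 := by
          rw [div_le_iff₀ (by positivity)]
          nlinarith
  linarith


omit [Fintype X] in
lemma ind_nonneg {P : Prop} [Decidable P] : (0:ℝ) ≤ if P then 1 else 0 := by
  by_cases h : P <;> simp [h]

omit [Fintype X] in
lemma ind_le_ind {P Q : Prop} [Decidable P] [Decidable Q] (h : P → Q) :
    (if P then (1:ℝ) else 0) ≤ if Q then 1 else 0 := by
  by_cases hP : P
  · rw [if_pos hP, if_pos (h hP)]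
  · rw [if_neg hP]; exact ind_nonneg

/-- coordinatewise swap of a double sample -/
def sw (σ : Fin n → Bool) (p : (Fin n → X) × (Fin n → X)) : (Fin n → X) × (Fin n → X) :=
  (fun i => if σ i then p.2 i else p.1 i, fun i => if σ i then p.1 i else p.2 i)

omit [Fintype X] in
lemma sw_invol (σ : Fin n → Bool) : Function.Involutive (sw (X := X) σ) := by
  intro p
  unfold sw
  refine Prod.ext ?_ ?_ <;> · simp only; funext i; by_cases h : σ i <;> simp [h]

omit [Fintype X] in
lemma W_sw (Px : X → ℝ) (σ : Fin n → Bool) (p : (Fin n → X) × (Fin n → X)) :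
    W Px (sw σ p).1 * W Px (sw σ p).2 = W Px p.1 * W Px p.2 := by
  unfold W sw
  simp only
  rw [← Finset.prod_mul_distrib, ← Finset.prod_mul_distrib]
  exact Finset.prod_congr rfl fun i _ => by by_cases h : σ i <;> simp [h, mul_comm]

lemma sum_sw (σ : Fin n → Bool) (H : (Fin n → X) × (Fin n → X) → ℝ) :
    ∑ p : (Fin n → X) × (Fin n → X), H (sw σ p) = ∑ p, H p :=
  Fintype.sum_bijective (sw σ) (sw_invol σ).bijective _ _ (fun _ => rfl)

lemma cylinder (S : Finset (Fin n)) (τ : Fin n → Bool) :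
    ∑ σ : Fin n → Bool, (1/2:ℝ)^n * (if (∀ i ∈ S, σ i = τ i) then (1:ℝ) else 0)
      = (1/2)^(S.card) := by
  classical
  have key := Efactor (X := Bool)
    (fun i b => (1/2 : ℝ) * (if i ∈ S then (if b = τ i then 1 else 0) else 1))
  beta_reduce at key
  calc ∑ σ : Fin n → Bool, (1/2:ℝ)^n * (if (∀ i ∈ S, σ i = τ i) then (1:ℝ) else 0)
      = ∑ σ : Fin n → Bool, ∏ i,
          ((1/2 : ℝ) * (if i ∈ S then (if σ i = τ i then 1 else 0) else 1)) := by
        refine Finset.sum_congr rfl fun σ _ => ?_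
        rw [Finset.prod_mul_distrib, Finset.prod_const, Finset.card_univ, Fintype.card_fin]
        congr 1
        by_cases h : ∀ i ∈ S, σ i = τ i
        · rw [if_pos h]
          exact (Finset.prod_eq_one fun i _ => by
            by_cases hi : i ∈ S <;> simp [hi, h i]).symm
        · rw [if_neg h]
          push_neg at h
          obtain ⟨i, hiS, hne⟩ := h
          exact (Finset.prod_eq_zero (Finset.mem_univ i) (by simp [hiS, hne])).symm
    _ = ∏ i : Fin n, ∑ b : Bool, ((1/2 : ℝ) * (if i ∈ S then (if b = τ i then 1 else 0) else 1)) := key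
    _ = ∏ i : Fin n, (if i ∈ S then (1/2 : ℝ) else 1) := by
        refine Finset.prod_congr rfl fun i _ => ?_
        by_cases hi : i ∈ S
        · simp only [hi, if_true, Fintype.sum_bool]
          by_cases hτ : τ i <;> simp [hτ]
        · simp [hi]
    _ = (1/2)^(S.card) := by
        rw [Finset.prod_ite_mem Finset.univ S fun _ => (1/2 : ℝ), Finset.univ_inter,
          Finset.prod_const]

lemma per_r (r : X → Bool) (z z' : Fin n → X) (k : ℕ) :
    ∑ σ : Fin n → Bool, (1/2:ℝ)^n *
        (if ((∀ i, r ((sw σ (z,z')).1 i) = false) ∧ ((k:ℝ) ≤ cnt r ((sw σ (z,z')).2)))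
          then (1:ℝ) else 0)
      ≤ (1/2)^k := by
  classical
  set S : Finset (Fin n) := Finset.univ.filter (fun i => r (z i) ≠ r (z' i)) with hS
  by_cases hcard : k ≤ S.card
  · calc ∑ σ : Fin n → Bool, (1/2:ℝ)^n *
        (if ((∀ i, r ((sw σ (z,z')).1 i) = false) ∧ ((k:ℝ) ≤ cnt r ((sw σ (z,z')).2)))
          then (1:ℝ) else 0)
        ≤ ∑ σ : Fin n → Bool, (1/2:ℝ)^n * (if (∀ i ∈ S, σ i = r (z i)) then (1:ℝ) else 0) := by
          refine Finset.sum_le_sum fun σ _ => mul_le_mul_of_nonneg_left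
            (ind_le_ind ?_) (by positivity)
          rintro ⟨hcons, -⟩ i hiS
          have hne : r (z i) ≠ r (z' i) := by simpa [hS] using hiS
          have hfi := hcons i
          by_cases hσ : σ i
          · simp only [sw, hσ, if_true] at hfi
            cases hzi : r (z i) <;> cases hzi' : r (z' i) <;> simp_all [hσ]
          · simp only [sw, hσ, if_false] at hfi
            cases hzi : r (z i) <;> simp_all [hσ]
      _ = (1/2)^(S.card) := cylinder S (fun i => r (z i))
      _ ≤ (1/2)^k := pow_le_pow_of_le_one (by norm_num) (by norm_num) hcard
  · push_neg at hcard
    have hzero : ∀ σ : Fin n → Bool,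
        (if ((∀ i, r ((sw σ (z,z')).1 i) = false) ∧ ((k:ℝ) ≤ cnt r ((sw σ (z,z')).2)))
          then (1:ℝ) else 0) = 0 := by
      intro σ
      rw [if_neg]
      rintro ⟨hcons, hcnt⟩
      have hle : cnt r ((sw σ (z,z')).2) ≤ (S.card : ℝ) := by
        rw [cnt]
        calc ∑ i, (if r ((sw σ (z,z')).2 i) then (1:ℝ) else 0)
            ≤ ∑ i : Fin n, (if i ∈ S then (1:ℝ) else 0) := by
              refine Finset.sum_le_sum fun i _ => ind_le_ind ?_
              intro h2
              have hfi := hcons i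
              simp only [hS, Finset.mem_filter, Finset.mem_univ, true_and]
              by_cases hσ : σ i
              · simp only [sw, hσ, if_true] at hfi h2
                cases hzi : r (z i) <;> simp_all
              · simp only [sw, hσ, if_false] at hfi h2
                cases hzi : r (z i) <;> simp_all
          _ = (S.card : ℝ) := by
              rw [Finset.sum_ite_mem, Finset.univ_inter, Finset.sum_const, nsmul_eq_mul,
                mul_one]
      have : (k : ℝ) ≤ (S.card : ℝ) := le_trans hcnt hle
      exact absurd (by exact_mod_cast this) (not_le.2 hcard)
    rw [Finset.sum_congr rfl fun σ _ => by rw [hzero σ, mul_zero]]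
    simp


lemma core (Px : X → ℝ) (hPx : ∀ x, 0 ≤ Px x) (h1 : ∑ x, Px x = 1)
    (G : Finset (X → Bool)) (ε : ℝ) (h8 : 8 ≤ (n:ℝ) * ε) (Φ : ℕ)
    (hΦ : ∀ z z' : Fin n → X, ∃ R : Finset (X → Bool), R.card ≤ Φ ∧
      ∀ g ∈ G, ∃ r ∈ R, (∀ i, r (z i) = g (z i)) ∧ (∀ i, r (z' i) = g (z' i))) :
    ∑ s : Fin n → X, W Px s *
      (if ∃ g ∈ G, (∀ i, g (s i) = false) ∧ ε < mu Px g then (1:ℝ) else 0)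
      ≤ 2 * Φ * (1/2 : ℝ)^(⌈(n:ℝ)*ε/4⌉₊) := by
  classical
  set k : ℕ := ⌈(n:ℝ)*ε/4⌉₊ with hk
  set B2 : (Fin n → X) × (Fin n → X) → Prop :=
    fun p => ∃ g ∈ G, (∀ i, g (p.1 i) = false) ∧ ((k:ℝ) ≤ cnt g p.2) with hB2
  have WWnn : ∀ p : (Fin n → X) × (Fin n → X), 0 ≤ W Px p.1 * W Px p.2 :=
    fun p => mul_nonneg (W_nonneg Px hPx p.1) (W_nonneg Px hPx p.2)
  have EWW : ∑ p : (Fin n → X) × (Fin n → X), W Px p.1 * W Px p.2 = 1 := by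
    rw [Fintype.sum_prod_type]
    simp only [← Finset.mul_sum, sum_W Px h1]
    simpa using sum_W Px h1 (n := n)
  -- Step A : symmetrization
  have stepA : ∑ s : Fin n → X, W Px s *
      (if ∃ g ∈ G, (∀ i, g (s i) = false) ∧ ε < mu Px g then (1:ℝ) else 0)
      ≤ 2 * ∑ p : (Fin n → X) × (Fin n → X),
          W Px p.1 * W Px p.2 * (if B2 p then (1:ℝ) else 0) := by
    have pts : ∀ s : Fin n → X, W Px s *
        (if ∃ g ∈ G, (∀ i, g (s i) = false) ∧ ε < mu Px g then (1:ℝ) else 0)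
        ≤ 2 * ∑ s' : Fin n → X, W Px s * W Px s' * (if B2 (s, s') then (1:ℝ) else 0) := by
      intro s
      by_cases hBad : ∃ g ∈ G, (∀ i, g (s i) = false) ∧ ε < mu Px g
      · obtain ⟨g, hgG, hcons, hμ⟩ := hBad
        rw [if_pos ⟨g, hgG, hcons, hμ⟩, mul_one]
        have hch := cheby Px hPx h1 g ε (le_of_lt hμ) h8
        calc W Px s = W Px s * (2 * (1/2)) := by norm_num
          _ ≤ W Px s * (2 * ∑ s' : Fin n → X, W Px s' *
              (if ((k:ℝ)) ≤ cnt g s' then (1:ℝ) else 0)) := by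
              refine mul_le_mul_of_nonneg_left (by linarith) (W_nonneg Px hPx s)
          _ = 2 * ∑ s' : Fin n → X, W Px s * W Px s' *
              (if ((k:ℝ)) ≤ cnt g s' then (1:ℝ) else 0) := by
              simp only [Finset.mul_sum]
              exact Finset.sum_congr rfl fun s' _ => by ring
          _ ≤ 2 * ∑ s' : Fin n → X, W Px s * W Px s' * (if B2 (s, s') then (1:ℝ) else 0) := by
              refine mul_le_mul_of_nonneg_left (Finset.sum_le_sum fun s' _ => ?_) (by norm_num)
              exact mul_le_mul_of_nonneg_left
                (ind_le_ind fun h => ⟨g, hgG, hcons, h⟩) (WWnn (s, s'))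
      · rw [if_neg hBad, mul_zero]
        refine mul_nonneg (by norm_num) (Finset.sum_nonneg fun s' _ => ?_)
        exact mul_nonneg (WWnn (s, s')) ind_nonneg
    calc ∑ s : Fin n → X, W Px s *
        (if ∃ g ∈ G, (∀ i, g (s i) = false) ∧ ε < mu Px g then (1:ℝ) else 0)
        ≤ ∑ s : Fin n → X, 2 * ∑ s' : Fin n → X,
            W Px s * W Px s' * (if B2 (s, s') then (1:ℝ) else 0) :=
          Finset.sum_le_sum fun s _ => pts s
      _ = 2 * ∑ p : (Fin n → X) × (Fin n → X),
            W Px p.1 * W Px p.2 * (if B2 p then (1:ℝ) else 0) := by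
          rw [← Finset.mul_sum, Fintype.sum_prod_type]
  -- Step B : swapping
  have stepB : ∑ p : (Fin n → X) × (Fin n → X),
      W Px p.1 * W Px p.2 * (if B2 p then (1:ℝ) else 0) ≤ Φ * (1/2:ℝ)^k := by
    have swinv : ∀ σ : Fin n → Bool,
        ∑ p : (Fin n → X) × (Fin n → X), W Px p.1 * W Px p.2 * (if B2 p then (1:ℝ) else 0)
        = ∑ p : (Fin n → X) × (Fin n → X),
            W Px p.1 * W Px p.2 * (if B2 (sw σ p) then (1:ℝ) else 0) := by
      intro σ
      calc ∑ p : (Fin n → X) × (Fin n → X), W Px p.1 * W Px p.2 * (if B2 p then (1:ℝ) else 0)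
          = ∑ p : (Fin n → X) × (Fin n → X), W Px (sw σ p).1 * W Px (sw σ p).2 *
              (if B2 (sw σ p) then (1:ℝ) else 0) :=
            (sum_sw σ (fun p => W Px p.1 * W Px p.2 * (if B2 p then (1:ℝ) else 0))).symm
        _ = ∑ p : (Fin n → X) × (Fin n → X), W Px p.1 * W Px p.2 *
              (if B2 (sw σ p) then (1:ℝ) else 0) :=
            Finset.sum_congr rfl fun p _ => by rw [W_sw]
    have avg : ∑ p : (Fin n → X) × (Fin n → X),
        W Px p.1 * W Px p.2 * (if B2 p then (1:ℝ) else 0)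
        = ∑ p : (Fin n → X) × (Fin n → X), W Px p.1 * W Px p.2 *
            ((1/2:ℝ)^n * ∑ σ : Fin n → Bool, (if B2 (sw σ p) then (1:ℝ) else 0)) := by
      have t1 : ∑ σ : Fin n → Bool, ∑ p : (Fin n → X) × (Fin n → X),
          W Px p.1 * W Px p.2 * (if B2 (sw σ p) then (1:ℝ) else 0)
          = (2^n : ℝ) * ∑ p : (Fin n → X) × (Fin n → X),
              W Px p.1 * W Px p.2 * (if B2 p then (1:ℝ) else 0) := by
        rw [Finset.sum_congr rfl fun σ _ => (swinv σ).symm, Finset.sum_const,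
          Finset.card_univ, nsmul_eq_mul]
        norm_num [Fintype.card_fun]
      have t2 : ∑ σ : Fin n → Bool, ∑ p : (Fin n → X) × (Fin n → X),
          W Px p.1 * W Px p.2 * (if B2 (sw σ p) then (1:ℝ) else 0)
          = ∑ p : (Fin n → X) × (Fin n → X), ∑ σ : Fin n → Bool,
              W Px p.1 * W Px p.2 * (if B2 (sw σ p) then (1:ℝ) else 0) :=
        Finset.sum_comm
      have h2n : ((2:ℝ)^n) ≠ 0 := by positivity
      calc ∑ p : (Fin n → X) × (Fin n → X),
          W Px p.1 * W Px p.2 * (if B2 p then (1:ℝ) else 0)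
          = (1/2:ℝ)^n * ((2^n : ℝ) * ∑ p : (Fin n → X) × (Fin n → X),
              W Px p.1 * W Px p.2 * (if B2 p then (1:ℝ) else 0)) := by
            rw [← mul_assoc, one_div, inv_pow, inv_mul_cancel₀ h2n, one_mul]
        _ = (1/2:ℝ)^n * ∑ p : (Fin n → X) × (Fin n → X), ∑ σ : Fin n → Bool,
              W Px p.1 * W Px p.2 * (if B2 (sw σ p) then (1:ℝ) else 0) := by
            rw [← t1, t2]
        _ = ∑ p : (Fin n → X) × (Fin n → X), W Px p.1 * W Px p.2 *
              ((1/2:ℝ)^n * ∑ σ : Fin n → Bool, (if B2 (sw σ p) then (1:ℝ) else 0)) := by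
            rw [Finset.mul_sum]
            refine Finset.sum_congr rfl fun p _ => ?_
            simp only [Finset.mul_sum]
            exact Finset.sum_congr rfl fun σ _ => by ring
    have hin : ∀ p : (Fin n → X) × (Fin n → X),
        (1/2:ℝ)^n * ∑ σ : Fin n → Bool, (if B2 (sw σ p) then (1:ℝ) else 0)
          ≤ (Φ : ℝ) * (1/2:ℝ)^k := by
      intro p
      obtain ⟨R, hRcard, hRcov⟩ := hΦ p.1 p.2
      have hptw : ∀ σ : Fin n → Bool, (if B2 (sw σ p) then (1:ℝ) else 0)
          ≤ ∑ r ∈ R, (if ((∀ i, r ((sw σ (p.1, p.2)).1 i) = false) ∧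
              ((k:ℝ) ≤ cnt r ((sw σ (p.1, p.2)).2))) then (1:ℝ) else 0) := by
        intro σ
        by_cases hb : B2 (sw σ p)
        · have hb' := hb
          obtain ⟨g, hgG, hcons, hcnt⟩ := hb'
          obtain ⟨r, hrR, hrz, hrz'⟩ := hRcov g hgG
          have hr1 : ∀ i, r ((sw σ (p.1, p.2)).1 i) = g ((sw σ p).1 i) := by
            intro i
            by_cases hσ : σ i <;> simp [sw, hσ, hrz i, hrz' i]
          have hr2 : cnt r ((sw σ (p.1, p.2)).2) = cnt g ((sw σ p).2) := by
            refine Finset.sum_congr rfl fun i _ => ?_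
            by_cases hσ : σ i <;> simp [sw, hσ, hrz i, hrz' i]
          have hev : (∀ i, r ((sw σ (p.1, p.2)).1 i) = false) ∧
              ((k:ℝ) ≤ cnt r ((sw σ (p.1, p.2)).2)) := by
            constructor
            · intro i; rw [hr1 i]; exact hcons i
            · rw [hr2]; exact hcnt
          rw [if_pos hb]
          calc (1:ℝ) = (if ((∀ i, r ((sw σ (p.1, p.2)).1 i) = false) ∧
              ((k:ℝ) ≤ cnt r ((sw σ (p.1, p.2)).2))) then (1:ℝ) else 0) := by
                rw [if_pos hev]
            _ ≤ _ := Finset.single_le_sum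
                (f := fun r' => (if ((∀ i, r' ((sw σ (p.1, p.2)).1 i) = false) ∧
                  ((k:ℝ) ≤ cnt r' ((sw σ (p.1, p.2)).2))) then (1:ℝ) else 0))
                (fun r' _ => ind_nonneg) hrR
        · rw [if_neg hb]
          exact Finset.sum_nonneg fun r _ => ind_nonneg
      calc (1/2:ℝ)^n * ∑ σ : Fin n → Bool, (if B2 (sw σ p) then (1:ℝ) else 0)
          ≤ (1/2:ℝ)^n * ∑ σ : Fin n → Bool, ∑ r ∈ R,
              (if ((∀ i, r ((sw σ (p.1, p.2)).1 i) = false) ∧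
                ((k:ℝ) ≤ cnt r ((sw σ (p.1, p.2)).2))) then (1:ℝ) else 0) := by
            refine mul_le_mul_of_nonneg_left (Finset.sum_le_sum fun σ _ => hptw σ)
              (by positivity)
        _ = ∑ r ∈ R, ∑ σ : Fin n → Bool, (1/2:ℝ)^n *
              (if ((∀ i, r ((sw σ (p.1, p.2)).1 i) = false) ∧
                ((k:ℝ) ≤ cnt r ((sw σ (p.1, p.2)).2))) then (1:ℝ) else 0) := by
            rw [Finset.mul_sum, Finset.sum_comm]
            exact Finset.sum_congr rfl fun r _ => by rw [Finset.mul_sum]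
        _ ≤ ∑ r ∈ R, (1/2:ℝ)^k := Finset.sum_le_sum fun r _ => per_r r p.1 p.2 k
        _ = (R.card : ℝ) * (1/2:ℝ)^k := by rw [Finset.sum_const, nsmul_eq_mul]
        _ ≤ (Φ : ℝ) * (1/2:ℝ)^k := by
            refine mul_le_mul_of_nonneg_right ?_ (by positivity)
            exact_mod_cast hRcard
    calc ∑ p : (Fin n → X) × (Fin n → X),
        W Px p.1 * W Px p.2 * (if B2 p then (1:ℝ) else 0)
        = ∑ p : (Fin n → X) × (Fin n → X), W Px p.1 * W Px p.2 *
            ((1/2:ℝ)^n * ∑ σ : Fin n → Bool, (if B2 (sw σ p) then (1:ℝ) else 0)) := avg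
      _ ≤ ∑ p : (Fin n → X) × (Fin n → X), W Px p.1 * W Px p.2 * ((Φ : ℝ) * (1/2:ℝ)^k) :=
          Finset.sum_le_sum fun p _ => mul_le_mul_of_nonneg_left (hin p) (WWnn p)
      _ = (Φ : ℝ) * (1/2:ℝ)^k := by rw [← Finset.sum_mul, EWW, one_mul]
  calc ∑ s : Fin n → X, W Px s *
      (if ∃ g ∈ G, (∀ i, g (s i) = false) ∧ ε < mu Px g then (1:ℝ) else 0)
      ≤ 2 * ∑ p : (Fin n → X) × (Fin n → X),
          W Px p.1 * W Px p.2 * (if B2 p then (1:ℝ) else 0) := stepA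
    _ ≤ 2 * ((Φ : ℝ) * (1/2:ℝ)^k) := by linarith [stepB]
    _ = 2 * Φ * (1/2:ℝ)^k := by ring


lemma sum_choose_le (m d : ℕ) : ∑ k ∈ Finset.Iic d, m.choose k ≤ (m+1)^d := by
  have hIic : ∀ e : ℕ, Finset.Iic e = Finset.range (e+1) := fun e => by
    ext k; simp [Nat.lt_succ_iff]
  induction d with
  | zero => simp [hIic]
  | succ d ih =>
    rw [hIic] at ih ⊢
    rw [Finset.sum_range_succ]
    have h1 : m.choose (d+1) ≤ m * m.choose d := by
      rcases Nat.lt_or_ge m (d+1) with h | h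
      · rw [Nat.choose_eq_zero_of_lt h]; exact Nat.zero_le _
      · calc m.choose (d+1) ≤ m.choose (d+1) * (d+1) :=
              Nat.le_mul_of_pos_right _ (by omega)
          _ = m.choose d * (m - d) := Nat.choose_succ_right_eq m d
          _ ≤ m.choose d * m := Nat.mul_le_mul_left _ (by omega)
          _ = m * m.choose d := Nat.mul_comm _ _
    have h2 : m.choose d ≤ (m+1)^d :=
      le_trans (Finset.single_le_sum (f := fun k => m.choose k)
        (fun k _ => Nat.zero_le _) (Finset.mem_range.2 (Nat.lt_succ_self d))) ih
    calc (∑ k ∈ Finset.range (d+1), m.choose k) + m.choose (d+1)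
        ≤ (m+1)^d + m * (m+1)^d :=
          Nat.add_le_add ih (le_trans h1 (Nat.mul_le_mul_left m h2))
      _ = (m+1)^(d+1) := by ring

lemma growth {α : Type*} (F : Set (α → Bool)) (d : ℕ) (hd : VCdimLe F d)
    (J : Type) [Fintype J] (w : J → α) :
    ∃ R : Finset (α → Bool), R.card ≤ (Fintype.card J + 1)^d ∧
      (↑R : Set (α → Bool)) ⊆ F ∧
      ∀ f ∈ F, ∃ r ∈ R, ∀ j, r (w j) = f (w j) := by
  classical
  set pat : (α → Bool) → Finset J := fun f => Finset.univ.filter (fun j => f (w j) = true)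
    with hpat
  set 𝒜 : Finset (Finset J) := Set.Finite.toFinset (Set.toFinite (pat '' F)) with h𝒜
  have hmem𝒜 : ∀ u, u ∈ 𝒜 ↔ ∃ f ∈ F, pat f = u := by
    intro u; simp [h𝒜, Set.mem_image]
  have hrep : ∀ u ∈ 𝒜, ∃ f, f ∈ F ∧ pat f = u := fun u hu => by
    obtain ⟨f, hf, hp⟩ := (hmem𝒜 u).1 hu; exact ⟨f, hf, hp⟩
  choose rep hrepF hreppat using hrep
  refine ⟨𝒜.attach.image (fun u => rep u.1 u.2), ?_, ?_, ?_⟩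
  · -- cardinality
    have hvc : 𝒜.vcDim ≤ d := by
      refine Finset.sup_le fun s hs => ?_
      have hshat : 𝒜.Shatters s := Finset.mem_shatterer.1 hs
      set e : Fin s.card → {x // x ∈ s} := fun i => s.equivFin.symm i with he
      have einj : Function.Injective (fun i => (e i : J)) :=
        fun i j h => s.equivFin.symm.injective (Subtype.ext h)
      refine hd s.card (fun i => w (e i : J)) ?_
      intro v
      set t : Finset J :=
        (Finset.univ.filter (fun i : Fin s.card => v i)).image (fun i => (e i : J)) with ht
      have hts : t ⊆ s := by
        intro j hj
        simp only [ht, Finset.mem_image, Finset.mem_filter] at hj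
        obtain ⟨i, _, rfl⟩ := hj
        exact (e i).2
      obtain ⟨u, hu𝒜, hsu⟩ := hshat hts
      obtain ⟨f, hfF, hfu⟩ := (hmem𝒜 u).1 hu𝒜
      refine ⟨f, hfF, fun i => ?_⟩
      have hj : ((e i : J) ∈ u) ↔ (e i : J) ∈ t := by
        constructor
        · intro h; rw [← hsu]; exact Finset.mem_inter.2 ⟨(e i).2, h⟩
        · intro h; have := hsu ▸ h; exact (Finset.mem_inter.1 this).2
      have hjt : ((e i : J) ∈ t) ↔ v i = true := by
        simp only [ht, Finset.mem_image, Finset.mem_filter, Finset.mem_univ, true_and]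
        constructor
        · rintro ⟨i', hvi', hii'⟩; rwa [← einj hii']
        · intro h; exact ⟨i, h, rfl⟩
      have hju : ((e i : J) ∈ u) ↔ f (w (e i : J)) = true := by
        rw [← hfu]; simp [hpat]
      have hmain : f (w (e i : J)) = true ↔ v i = true :=
        (hju.symm.trans hj).trans hjt
      rcases Bool.dichotomy (v i) with hv | hv
      · rw [hv, Bool.eq_false_iff]
        intro hc
        have hvt := hmain.1 hc
        rw [hv] at hvt
        simp at hvt
      · rw [hv]
        exact hmain.2 hv
    calc (𝒜.attach.image (fun u => rep u.1 u.2)).card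
        ≤ 𝒜.attach.card := Finset.card_image_le
      _ = 𝒜.card := Finset.card_attach
      _ ≤ 𝒜.shatterer.card := Finset.card_le_card_shatterer 𝒜
      _ ≤ ∑ k ∈ Finset.Iic 𝒜.vcDim, (Fintype.card J).choose k :=
          Finset.card_shatterer_le_sum_vcDim
      _ ≤ ∑ k ∈ Finset.Iic d, (Fintype.card J).choose k :=
          Finset.sum_le_sum_of_subset (Finset.Iic_subset_Iic.2 hvc)
      _ ≤ (Fintype.card J + 1)^d := sum_choose_le _ _
  · -- subset of F
    intro r hr
    simp only [Finset.coe_image, Set.mem_image] at hr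
    obtain ⟨u, _, rfl⟩ := hr
    exact hrepF u.1 u.2
  · -- covering
    intro f hf
    have hu : pat f ∈ 𝒜 := (hmem𝒜 (pat f)).2 ⟨f, hf, rfl⟩
    refine ⟨rep (pat f) hu, Finset.mem_image.2 ⟨⟨pat f, hu⟩, Finset.mem_attach _ _, rfl⟩, ?_⟩
    intro j
    have hpatid : pat (rep (pat f) hu) = pat f := hreppat (pat f) hu
    have hiff : rep (pat f) hu (w j) = true ↔ f (w j) = true := by
      constructor
      · intro h
        have : j ∈ pat (rep (pat f) hu) := Finset.mem_filter.2 ⟨Finset.mem_univ _, h⟩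
        rw [hpatid] at this
        simpa [hpat] using this
      · intro h
        have : j ∈ pat f := by simp [hpat, h]
        rw [← hpatid] at this
        simpa [hpat] using this
    rcases Bool.dichotomy (f (w j)) with h | h
    · rw [h, Bool.eq_false_iff]
      intro hc
      exact absurd (hiff.1 hc) (by simp [h])
    · rw [h]; exact hiff.2 h



set_option maxHeartbeats 1000000 in
lemma numeric (T d n : ℕ) (δ : ℝ) (hT : 2 ≤ T) (hd : 1 ≤ d) (hn : 2 ≤ n)
    (hδ0 : 0 < δ) (hδ1 : δ < 1) :
    8 ≤ (n:ℝ) * (64 * ((d : ℝ) * Real.log T * Real.log n + Real.log (1 / δ)) / n) ∧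
    2 * ((((n+n)*T + 1 : ℕ) : ℝ)^d) *
      (1/2:ℝ)^(⌈(n:ℝ) * (64 * ((d : ℝ) * Real.log T * Real.log n + Real.log (1 / δ)) / n)
        / 4⌉₊) ≤ δ := by
  have hn0 : (0:ℝ) < n := by exact_mod_cast Nat.lt_of_lt_of_le (by norm_num) hn
  have hT0 : (0:ℝ) < T := by exact_mod_cast Nat.lt_of_lt_of_le (by norm_num) hT
  set l2 := Real.log 2 with hl2
  have hl2p : 0.6931471803 < l2 := Real.log_two_gt_d9
  have hl2u : l2 < 0.6931471808 := Real.log_two_lt_d9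
  have hlT : l2 ≤ Real.log T := Real.log_le_log (by norm_num) (by exact_mod_cast hT)
  have hln : l2 ≤ Real.log n := Real.log_le_log (by norm_num) (by exact_mod_cast hn)
  have hlT0 : 0 < Real.log T := lt_of_lt_of_le (by linarith) hlT
  have hln0 : 0 < Real.log n := lt_of_lt_of_le (by linarith) hln
  set L := Real.log (1/δ) with hLdef
  have hL : 0 < L := Real.log_pos (by rw [lt_div_iff₀ hδ0]; linarith)
  set A := (d:ℝ) * Real.log T * Real.log n with hA
  have hdc : (1:ℝ) ≤ d := by exact_mod_cast hd
  have hApos : l2^2 ≤ A := by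
    have h1 : l2*l2 ≤ Real.log T * Real.log n := mul_le_mul hlT hln (by linarith) hlT0.le
    have h2 : Real.log T * Real.log n ≤ (d:ℝ) * (Real.log T * Real.log n) :=
      le_mul_of_one_le_left (by positivity) hdc
    rw [hA]; nlinarith
  have hA0 : 0 < A := lt_of_lt_of_le (by nlinarith) hApos
  have hnε : (n:ℝ) * (64 * (A + L) / n) = 64 * (A + L) := by field_simp
  constructor
  · rw [hnε]; nlinarith
  · set k : ℕ := ⌈(n:ℝ) * (64 * (A + L) / n) / 4⌉₊ with hkdef
    have hkk : 16 * (A + L) ≤ (k:ℝ) := by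
      refine le_trans ?_ (Nat.le_ceil _)
      rw [hnε]; ring_nf; linarith
    set m : ℕ := (n+n)*T + 1 with hm
    have hm1 : (1:ℝ) ≤ (m:ℝ) := by exact_mod_cast Nat.succ_le_succ (Nat.zero_le _)
    have hmle : (m:ℝ) ≤ ((n:ℝ) * T)^2 := by
      have : m ≤ (n*T)^2 := by nlinarith [Nat.mul_le_mul hn hT]
      calc (m:ℝ) ≤ ((((n*T)^2 : ℕ)):ℝ) := by exact_mod_cast this
        _ = ((n:ℝ)*T)^2 := by push_cast; ring
    have hlm : Real.log m ≤ 2 * (Real.log n + Real.log T) := by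
      calc Real.log m ≤ Real.log (((n:ℝ)*T)^2) :=
            Real.log_le_log (by linarith) hmle
        _ = 2 * (Real.log n + Real.log T) := by
            rw [Real.log_pow, Real.log_mul (ne_of_gt hn0) (ne_of_gt hT0)]
            push_cast; ring
    have hlm0 : 0 ≤ Real.log m := Real.log_nonneg hm1
    set dlm := (d:ℝ) * Real.log m with hdlm
    have hdlm0 : 0 ≤ dlm := mul_nonneg (by linarith) hlm0
    have hkey : l2 * (Real.log n + Real.log T) ≤ 2 * (Real.log n * Real.log T) := by
      nlinarith [mul_le_mul_of_nonneg_right hln hlT0.le,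
        mul_le_mul_of_nonneg_right hlT hln0.le]
    have hdlm4 : l2 * dlm ≤ 4 * A := by
      have s1 : l2 * Real.log m ≤ l2 * (2 * (Real.log n + Real.log T)) :=
        mul_le_mul_of_nonneg_left hlm (by linarith)
      have s2 : l2 * (2 * (Real.log n + Real.log T)) ≤ 4 * (Real.log n * Real.log T) := by
        nlinarith [hkey]
      have s3 : l2 * dlm = (d:ℝ) * (l2 * Real.log m) := by rw [hdlm]; ring
      have s4 : (d:ℝ) * (l2 * Real.log m) ≤ (d:ℝ) * (4 * (Real.log n * Real.log T)) :=
        mul_le_mul_of_nonneg_left (le_trans s1 (by linarith)) (by linarith)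
      calc l2 * dlm = (d:ℝ) * (l2 * Real.log m) := s3
        _ ≤ (d:ℝ) * (4 * (Real.log n * Real.log T)) := s4
        _ = 4 * A := by rw [hA]; ring
    have hdlm5 : 0.6931471803 * dlm ≤ 4 * A := by
      nlinarith [mul_le_mul_of_nonneg_right hl2p.le hdlm0]
    have hl2A : 0.6931471803 * l2 ≤ A := by
      have h1 : 0.6931471803 * l2 ≤ l2 * l2 :=
        mul_le_mul_of_nonneg_right hl2p.le (by linarith)
      nlinarith [hApos]
    have hkl2 : 16 * (A + L) * 0.6931471803 ≤ (k:ℝ) * l2 := by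
      have h1 : 16 * (A + L) * 0.6931471803 ≤ 16 * (A + L) * l2 :=
        mul_le_mul_of_nonneg_left hl2p.le (by linarith : (0:ℝ) ≤ 16*(A+L))
      have h2 : 16 * (A + L) * l2 ≤ (k:ℝ) * l2 :=
        mul_le_mul_of_nonneg_right hkk (by linarith)
      linarith
    -- reduce to log inequality
    have hgoal : l2 + dlm + L ≤ (k:ℝ) * l2 := by linarith
    have h2k : (0:ℝ) < 2^k := by positivity
    have hmd : (0:ℝ) < (m:ℝ)^d := by positivity
    have cast1 : (2:ℝ) * (m:ℝ)^d * (1/2:ℝ)^k = 2 * (m:ℝ)^d / 2^k := by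
      rw [div_pow, one_pow]; ring
    rw [cast1, div_le_iff₀ h2k]
    have hlogle : Real.log (2 * (m:ℝ)^d) ≤ Real.log (δ * 2^k) := by
      rw [Real.log_mul (by norm_num) (ne_of_gt hmd),
        Real.log_mul (ne_of_gt hδ0) (ne_of_gt h2k), Real.log_pow, Real.log_pow]
      have hlogδ : Real.log δ = -L := by
        simp [hLdef, one_div, Real.log_inv]
      rw [hlogδ]
      linarith [hgoal]
    exact (Real.log_le_log_iff (by positivity) (by positivity)).1 hlogle


end RSFT

open Classical in
/-- realizable SFT guarantee. There is a universal constant `c` such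
that for any class `F` of next-token predictors with `VC(F) ≤ d`, target `f* ∈ F`,
reward with `1 − r_{f*}(x,y) ≤ 1{f*^AR(x) ≠ y}`, finitely supported prompt
distribution, and next-token ERM `f̂`: with probability at least `1−δ` over `n`
i.i.d. samples `(xᵢ, f*^AR(xᵢ))`, the SFT reward satisfies
`E_{P_x} r_{f*}(x, f̂^AR(x)) ≥ 1 − c·(d·log T·log n + log(1/δ))/n`. -/
theorem realizable_sft_bound :
    ∃ c : ℝ, 0 < c ∧
    ∀ (T d : ℕ), 2 ≤ T → 1 ≤ d →
    ∀ (F : Set (List Bool → Bool)) (fstar : List Bool → Bool), fstar ∈ F →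
      VCdimLe F d →
    ∀ (X : Type) (_ : Fintype X) (_ : Nonempty X) (ι : X → List Bool)
      (Px : X → ℝ), (∀ x, 0 ≤ Px x) → (∑ x, Px x) = 1 →
    ∀ (rstar : List Bool → List Bool → ℝ),
      (∀ x y, 0 ≤ rstar x y ∧ rstar x y ≤ 1) →
      (∀ x y, 1 - rstar x y ≤ if arList fstar x T ≠ y then (1 : ℝ) else 0) →
    ∀ (n : ℕ) (δ : ℝ), 2 ≤ n → 0 < δ → δ < 1 →
    ∀ (erm : (Fin n → X) → (List Bool → Bool)),
      (∀ s, erm s ∈ F ∧ ∀ g ∈ F,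
        (∑ i, ∑ t ∈ Finset.range T,
          if erm s (ι (s i) ++ (arList fstar (ι (s i)) T).take t) ≠
             (arList fstar (ι (s i)) T).getD t false then (1 : ℕ) else 0) ≤
        (∑ i, ∑ t ∈ Finset.range T,
          if g (ι (s i) ++ (arList fstar (ι (s i)) T).take t) ≠
             (arList fstar (ι (s i)) T).getD t false then (1 : ℕ) else 0)) →
    (∑ s : Fin n → X, (∏ i, Px (s i)) *
      (if (∑ x, Px x * rstar (ι x) (arList (erm s) (ι x) T)) ≥
          1 - c * ((d : ℝ) * Real.log T * Real.log n + Real.log (1 / δ)) / n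
       then (1 : ℝ) else 0)) ≥ 1 - δ := by
  classical
  refine ⟨64, by norm_num, ?_⟩
  intro T d hT hd F fstar hfstarF hVC X _ _ ι Px hPx h1 rstar hr01 hrge n δ hn hδ0 hδ1 erm herm
  obtain ⟨h8, hnum⟩ := RSFT.numeric T d n δ hT hd hn hδ0 hδ1
  set gf : (List Bool → Bool) → X → Bool :=
    fun f x => decide (arList f (ι x) T ≠ arList fstar (ι x) T) with hgf
  set G : Finset (X → Bool) := Set.Finite.toFinset (Set.toFinite (gf '' F)) with hGdef
  have hGmem : ∀ g, g ∈ G ↔ ∃ f ∈ F, gf f = g := by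
    intro g; simp [hGdef, Set.mem_image]
  -- growth bound for the disagreement class
  have hΦ : ∀ z z' : Fin n → X, ∃ R : Finset (X → Bool), R.card ≤ ((n+n)*T+1)^d ∧
      ∀ g ∈ G, ∃ r ∈ R, (∀ i, r (z i) = g (z i)) ∧ (∀ i, r (z' i) = g (z' i)) := by
    intro z z'
    obtain ⟨R₀, hR₀card, hR₀F, hR₀cov⟩ := RSFT.growth F d hVC ((Fin n ⊕ Fin n) × Fin T)
      (fun j => ι (Sum.elim z z' j.1) ++ arList fstar (ι (Sum.elim z z' j.1)) (j.2 : ℕ))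
    have hcard : Fintype.card ((Fin n ⊕ Fin n) × Fin T) = (n+n)*T := by simp
    have hkeyf : ∀ (f r₀ : List Bool → Bool),
        (∀ j : (Fin n ⊕ Fin n) × Fin T,
          r₀ (ι (Sum.elim z z' j.1) ++ arList fstar (ι (Sum.elim z z' j.1)) (j.2 : ℕ))
          = f (ι (Sum.elim z z' j.1) ++ arList fstar (ι (Sum.elim z z' j.1)) (j.2 : ℕ))) →
        ∀ u : Fin n ⊕ Fin n, gf r₀ (Sum.elim z z' u) = gf f (Sum.elim z z' u) := by
      intro f r₀ hagree u
      set x := ι (Sum.elim z z' u) with hx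
      have hagt : ∀ t, t < T → (r₀ (x ++ arList fstar x t) = f (x ++ arList fstar x t)) :=
        fun t ht => hagree (u, ⟨t, ht⟩)
      have hiff : arList r₀ x T = arList fstar x T ↔ arList f x T = arList fstar x T := by
        rw [RSFT.arList_eq_iff r₀ fstar x T, RSFT.arList_eq_iff f fstar x T]
        constructor
        · intro h t ht; rw [← hagt t ht]; exact h t ht
        · intro h t ht; rw [hagt t ht]; exact h t ht
      simp only [hgf]
      exact decide_eq_decide.2 (not_congr hiff)
    refine ⟨R₀.image gf, ?_, ?_⟩
    · calc (R₀.image gf).card ≤ R₀.card := Finset.card_image_le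
        _ ≤ (Fintype.card ((Fin n ⊕ Fin n) × Fin T) + 1)^d := hR₀card
        _ = ((n+n)*T+1)^d := by rw [hcard]
    · intro g hgG
      obtain ⟨f, hfF, hfg⟩ := (hGmem g).1 hgG
      obtain ⟨r₀, hr₀R, hagree⟩ := hR₀cov f hfF
      refine ⟨gf r₀, Finset.mem_image_of_mem gf hr₀R, fun i => ?_, fun i => ?_⟩
      · rw [← hfg]; exact hkeyf f r₀ hagree (Sum.inl i)
      · rw [← hfg]; exact hkeyf f r₀ hagree (Sum.inr i)
  -- the good event implies the reward bound
  have hgood : ∀ s : Fin n → X,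
      (¬ ∃ g ∈ G, (∀ i, g (s i) = false) ∧
        (64 * ((d : ℝ) * Real.log T * Real.log n + Real.log (1 / δ)) / n) < RSFT.mu Px g) →
      (∑ x, Px x * rstar (ι x) (arList (erm s) (ι x) T)) ≥
        1 - 64 * ((d : ℝ) * Real.log T * Real.log n + Real.log (1 / δ)) / n := by
    intro s hs
    obtain ⟨hermF, hermle⟩ := herm s
    have hfstar0 : (∑ i, ∑ t ∈ Finset.range T,
        if fstar (ι (s i) ++ (arList fstar (ι (s i)) T).take t) ≠
           (arList fstar (ι (s i)) T).getD t false then (1 : ℕ) else 0) = 0 := by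
      refine Finset.sum_eq_zero fun i _ => Finset.sum_eq_zero fun t ht => ?_
      have ht' : t < T := Finset.mem_range.1 ht
      rw [RSFT.arList_take fstar (ι (s i)) ht'.le, RSFT.arList_getD fstar (ι (s i)) ht']
      rw [if_neg (fun h => h rfl)]
    have herm0 : (∑ i, ∑ t ∈ Finset.range T,
        if erm s (ι (s i) ++ (arList fstar (ι (s i)) T).take t) ≠
           (arList fstar (ι (s i)) T).getD t false then (1 : ℕ) else 0) = 0 := by
      have hle := hermle fstar hfstarF
      rw [hfstar0] at hle
      exact Nat.le_zero.1 hle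
    have hag : ∀ i, arList (erm s) (ι (s i)) T = arList fstar (ι (s i)) T := by
      intro i
      apply RSFT.arList_eq_of_agree
      intro t ht
      have hterm := Finset.sum_eq_zero_iff.1
        (Finset.sum_eq_zero_iff.1 herm0 i (Finset.mem_univ i)) t (Finset.mem_range.2 ht)
      rw [RSFT.arList_take fstar (ι (s i)) ht.le, RSFT.arList_getD fstar (ι (s i)) ht] at hterm
      by_contra hne
      rw [if_pos hne] at hterm
      exact one_ne_zero hterm
    have hgfG : gf (erm s) ∈ G := (hGmem _).2 ⟨erm s, hermF, rfl⟩
    have hcons : ∀ i, gf (erm s) (s i) = false := by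
      intro i
      simp only [hgf]
      simp [hag i]
    have hmuε : RSFT.mu Px (gf (erm s)) ≤
        64 * ((d : ℝ) * Real.log T * Real.log n + Real.log (1 / δ)) / n := by
      by_contra hlt; push_neg at hlt
      exact hs ⟨gf (erm s), hgfG, hcons, hlt⟩
    have hper : ∀ x : X, Px x * (1 - (if gf (erm s) x then (1:ℝ) else 0)) ≤
        Px x * rstar (ι x) (arList (erm s) (ι x) T) := by
      intro x
      refine mul_le_mul_of_nonneg_left ?_ (hPx x)
      by_cases hx : gf (erm s) x = true
      · rw [if_pos hx]
        linarith [(hr01 (ι x) (arList (erm s) (ι x) T)).1]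
      · have hx' : arList (erm s) (ι x) T = arList fstar (ι x) T := by
          simp only [hgf, decide_eq_true_eq] at hx
          exact not_not.1 hx
        have hrr := hrge (ι x) (arList (erm s) (ι x) T)
        rw [if_neg (fun h => h hx'.symm)] at hrr
        have hxf : gf (erm s) x = false := by
          simp only [hgf]; simp [hx']
        rw [hxf]
        simp only [Bool.false_eq_true, if_false]
        linarith
    have hsum : ∑ x, Px x * (1 - (if gf (erm s) x then (1:ℝ) else 0))
        = 1 - RSFT.mu Px (gf (erm s)) := by
      have e : ∑ x, Px x * (1 - (if gf (erm s) x then (1:ℝ) else 0))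
          = (∑ x, Px x) - ∑ x, Px x * (if gf (erm s) x then (1:ℝ) else 0) := by
        rw [← Finset.sum_sub_distrib]
        exact Finset.sum_congr rfl fun x _ => by ring
      rw [e, h1, RSFT.mu]
    calc ∑ x, Px x * rstar (ι x) (arList (erm s) (ι x) T)
        ≥ ∑ x, Px x * (1 - (if gf (erm s) x then (1:ℝ) else 0)) :=
          Finset.sum_le_sum fun x _ => hper x
      _ = 1 - RSFT.mu Px (gf (erm s)) := hsum
      _ ≥ 1 - 64 * ((d : ℝ) * Real.log T * Real.log n + Real.log (1 / δ)) / n := by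
          linarith
  -- assemble
  have hcore := RSFT.core Px hPx h1 G
    (64 * ((d : ℝ) * Real.log T * Real.log n + Real.log (1 / δ)) / n) h8
    (((n+n)*T+1)^d) hΦ
  rw [ge_iff_le]
  have key2 : (∑ s : Fin n → X, RSFT.W Px s *
        (if ¬ (∃ g ∈ G, (∀ i, g (s i) = false) ∧
          (64 * ((d : ℝ) * Real.log T * Real.log n + Real.log (1 / δ)) / n) < RSFT.mu Px g)
          then (1:ℝ) else 0))
      = 1 - ∑ s : Fin n → X, RSFT.W Px s *
        (if (∃ g ∈ G, (∀ i, g (s i) = false) ∧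
          (64 * ((d : ℝ) * Real.log T * Real.log n + Real.log (1 / δ)) / n) < RSFT.mu Px g)
          then (1:ℝ) else 0) := by
    rw [eq_sub_iff_add_eq, ← Finset.sum_add_distrib]
    have e1 : ∀ s : Fin n → X, RSFT.W Px s *
        (if ¬ (∃ g ∈ G, (∀ i, g (s i) = false) ∧
          (64 * ((d : ℝ) * Real.log T * Real.log n + Real.log (1 / δ)) / n) < RSFT.mu Px g)
          then (1:ℝ) else 0)
        + RSFT.W Px s *
        (if (∃ g ∈ G, (∀ i, g (s i) = false) ∧
          (64 * ((d : ℝ) * Real.log T * Real.log n + Real.log (1 / δ)) / n) < RSFT.mu Px g)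
          then (1:ℝ) else 0) = RSFT.W Px s := by
      intro s
      by_cases h : (∃ g ∈ G, (∀ i, g (s i) = false) ∧
          (64 * ((d : ℝ) * Real.log T * Real.log n + Real.log (1 / δ)) / n) < RSFT.mu Px g)
      · rw [if_pos h, if_neg (not_not.2 h)]; ring
      · rw [if_neg h, if_pos h]; ring
    rw [Finset.sum_congr rfl fun s _ => e1 s, RSFT.sum_W Px h1]
  have hΦcast : ((((n+n)*T+1)^d : ℕ) : ℝ) = (((n+n)*T + 1 : ℕ) : ℝ)^d := by push_cast; ring
  calc 1 - δ
      ≤ 1 - 2 * ((((n+n)*T+1)^d : ℕ) : ℝ) *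
          (1/2:ℝ)^(⌈(n:ℝ) * (64 * ((d : ℝ) * Real.log T * Real.log n + Real.log (1 / δ)) / n)
            / 4⌉₊) := by
        rw [hΦcast]; linarith [hnum]
    _ ≤ 1 - ∑ s : Fin n → X, RSFT.W Px s *
        (if (∃ g ∈ G, (∀ i, g (s i) = false) ∧
          (64 * ((d : ℝ) * Real.log T * Real.log n + Real.log (1 / δ)) / n) < RSFT.mu Px g)
          then (1:ℝ) else 0) := by linarith [hcore]
    _ = ∑ s : Fin n → X, RSFT.W Px s *
        (if ¬ (∃ g ∈ G, (∀ i, g (s i) = false) ∧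
          (64 * ((d : ℝ) * Real.log T * Real.log n + Real.log (1 / δ)) / n) < RSFT.mu Px g)
          then (1:ℝ) else 0) := key2.symm
    _ ≤ ∑ s : Fin n → X, RSFT.W Px s *
        (if (∑ x, Px x * rstar (ι x) (arList (erm s) (ι x) T)) ≥
          1 - 64 * ((d : ℝ) * Real.log T * Real.log n + Real.log (1 / δ)) / n
          then (1:ℝ) else 0) :=
        Finset.sum_le_sum fun s _ => mul_le_mul_of_nonneg_left
          (RSFT.ind_le_ind fun h => hgood s h) (RSFT.W_nonneg Px hPx s)
    _ = ∑ s : Fin n → X, (∏ i, Px (s i)) *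
        (if (∑ x, Px x * rstar (ι x) (arList (erm s) (ι x) T)) ≥
          1 - 64 * ((d : ℝ) * Real.log T * Real.log n + Real.log (1 / δ)) / n
          then (1:ℝ) else 0) := rfl
end
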